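/- arXiv:1112.5960 — 7 statements merged into one kernel-verified Lean document; each statement's English description precedes it below -/
import Mathlib

section
/- If a graph H is a minor of a graph G, then gd(H) ≤ gd(G). In particular, the graph parameter gd is monotone nondecreasing under edge deletion and edge contraction. -/
open Matrix Finset

/-- The Gram dimension of a graph `G`: the smallest integer `k ≥ 1` such that every
positive semidefinite matrix indexed by the vertices admits a positive semidefinite
matrix of rank at most `k` agreeing with it on the diagonal and on the edges of `G`. -/
noncomputable def gd {V : Type} [Fintype V] (G : SimpleGraph V) : ℕ :=
  sInf {k : ℕ | 1 ≤ k ∧ ∀ X : Matrix V V ℝ, X.PosSemidef →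
    ∃ Y : Matrix V V ℝ, Y.PosSemidef ∧ Y.rank ≤ k ∧
      (∀ i, Y i i = X i i) ∧ (∀ i j, G.Adj i j → Y i j = X i j)}

/-- `H` is a minor of `G`: there exist pairwise disjoint nonempty connected branch sets
in `G`, one for each vertex of `H`, with an edge of `G` between the branch sets of any
two adjacent vertices of `H`. -/
def IsMinorOf {U V : Type} (H : SimpleGraph U) (G : SimpleGraph V) : Prop :=
  ∃ B : U → Set V,
    (∀ u, (B u).Nonempty) ∧
    (∀ u, (G.induce (B u)).Connected) ∧
    (∀ u u', u ≠ u' → Disjoint (B u) (B u')) ∧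
    (∀ u u', H.Adj u u' → ∃ x ∈ B u, ∃ y ∈ B u', G.Adj x y)

/-- The graph obtained from `G` by contracting the edge `(a, b)` (identifying `b` with `a`). -/
def contractEdge {V : Type} [DecidableEq V] (G : SimpleGraph V) (a b : V) :
    SimpleGraph {v : V // v ≠ b} where
  Adj u w := u ≠ w ∧
    (G.Adj u.1 w.1 ∨ (u.1 = a ∧ G.Adj w.1 b) ∨ (w.1 = a ∧ G.Adj u.1 b))
  symm := by
    refine ⟨?_⟩
    rintro u w ⟨h1, h2⟩
    refine ⟨fun e => h1 e.symm, ?_⟩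
    rcases h2 with h | ⟨h3, h4⟩ | ⟨h3, h4⟩
    · exact Or.inl h.symm
    · exact Or.inr (Or.inr ⟨h3, h4⟩)
    · exact Or.inr (Or.inl ⟨h3, h4⟩)
  loopless := ⟨by rintro u ⟨h1, -⟩; exact h1 rfl⟩

private lemma vec_eq_of_dot {n : Type} [Fintype n] {a b : n → ℝ}
    (h1 : a ⬝ᵥ a = b ⬝ᵥ b) (h2 : a ⬝ᵥ b = a ⬝ᵥ a) : a = b := by
  have h3 : (a - b) ⬝ᵥ (a - b) = 0 := by
    rw [sub_dotProduct, dotProduct_sub, dotProduct_sub, dotProduct_comm b a]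
    linarith
  exact sub_eq_zero.mp (dotProduct_self_eq_zero.mp h3)

private lemma gd_mem {V : Type} [Fintype V] (G : SimpleGraph V) :
    1 ≤ gd G ∧ ∀ X : Matrix V V ℝ, X.PosSemidef →
      ∃ Y : Matrix V V ℝ, Y.PosSemidef ∧ Y.rank ≤ gd G ∧
        (∀ i, Y i i = X i i) ∧ (∀ i j, G.Adj i j → Y i j = X i j) := by
  have : gd G ∈ {k : ℕ | 1 ≤ k ∧ ∀ X : Matrix V V ℝ, X.PosSemidef →
      ∃ Y : Matrix V V ℝ, Y.PosSemidef ∧ Y.rank ≤ k ∧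
        (∀ i, Y i i = X i i) ∧ (∀ i j, G.Adj i j → Y i j = X i j)} := by
    apply Nat.sInf_mem
    exact ⟨max 1 (Fintype.card V), le_max_left _ _, fun X hX =>
      ⟨X, hX, (X.rank_le_card_width).trans (le_max_right _ _), fun _ => rfl, fun _ _ _ => rfl⟩⟩
  exact this

private lemma gd_minor_le {U V : Type} [Fintype U] [Fintype V] (H : SimpleGraph U)
    (G : SimpleGraph V) (hm : IsMinorOf H G) : gd H ≤ gd G := by
  classical
  obtain ⟨B, hne, hconn, hdisj, hedge⟩ := hm
  obtain ⟨hkG1, hkG⟩ := gd_mem G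
  apply Nat.sInf_le
  refine ⟨hkG1, ?_⟩
  intro X hX
  obtain ⟨A, hA⟩ : ∃ A : Matrix U U ℝ, X = Aᴴ * A := by
    open scoped MatrixOrder in exact CStarAlgebra.nonneg_iff_eq_star_mul_self.mp hX.nonneg
  set r : U → V := fun u => (hne u).choose with hr
  have hrB : ∀ u, r u ∈ B u := fun u => (hne u).choose_spec
  have huniq : ∀ {v : V} {u u' : U}, v ∈ B u → v ∈ B u' → u = u' := by
    intro v u u' h1 h2
    by_contra hne'
    exact (hdisj u u' hne').le_bot ⟨h1, h2⟩
  set φ : V → U → ℝ := fun v =>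
    if h : ∃ u, v ∈ B u then (fun i => A i h.choose) else 0 with hφdef
  have hφ : ∀ {v u}, v ∈ B u → φ v = fun i => A i u := by
    intro v u hv
    have hex : ∃ u, v ∈ B u := ⟨u, hv⟩
    have : hex.choose = u := huniq hex.choose_spec hv
    simp only [hφdef, dif_pos hex, this]
  set M : Matrix U V ℝ := Matrix.of fun i v => φ v i with hM
  set Z : Matrix V V ℝ := Mᴴ * M with hZ
  have hZpsd : Z.PosSemidef := posSemidef_conjTranspose_mul_self M
  have hZapp : ∀ v w, Z v w = φ v ⬝ᵥ φ w := by
    intro v w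
    simp [hZ, Matrix.mul_apply, Matrix.conjTranspose_apply, dotProduct, hM]
  have hXapp : ∀ u u', X u u' = (fun i => A i u) ⬝ᵥ (fun i => A i u') := by
    intro u u'
    simp [hA, Matrix.mul_apply, Matrix.conjTranspose_apply, dotProduct]
  obtain ⟨Y', hY'psd, hY'rank, hY'diag, hY'edge⟩ := hkG Z hZpsd
  obtain ⟨C, hC⟩ : ∃ C : Matrix V V ℝ, Y' = Cᴴ * C := by
    open scoped MatrixOrder in exact CStarAlgebra.nonneg_iff_eq_star_mul_self.mp hY'psd.nonneg
  set ψ : V → V → ℝ := fun v => fun i => C i v with hψdef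
  have hY'app : ∀ v w, Y' v w = ψ v ⬝ᵥ ψ w := by
    intro v w
    simp [hC, Matrix.mul_apply, Matrix.conjTranspose_apply, dotProduct, hψdef]
  -- ψ is constant on branch sets
  have key : ∀ (u : U) (x y : V), x ∈ B u → y ∈ B u → G.Adj x y → ψ x = ψ y := by
    intro u x y hx hy hxy
    have e1 : ψ x ⬝ᵥ ψ x = (fun i => A i u) ⬝ᵥ (fun i => A i u) := by
      rw [← hY'app, hY'diag, hZapp, hφ hx]
    have e2 : ψ y ⬝ᵥ ψ y = (fun i => A i u) ⬝ᵥ (fun i => A i u) := by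
      rw [← hY'app, hY'diag, hZapp, hφ hy]
    have e3 : ψ x ⬝ᵥ ψ y = (fun i => A i u) ⬝ᵥ (fun i => A i u) := by
      rw [← hY'app, hY'edge x y hxy, hZapp, hφ hx, hφ hy]
    exact vec_eq_of_dot (e1.trans e2.symm) (e3.trans e1.symm)
  have hψwalk : ∀ (u : U) (s t : (B u : Set V)) (_ : (G.induce (B u)).Walk s t),
      ψ s.1 = ψ t.1 := by
    intro u s t p
    induction p with
    | nil => rfl
    | @cons a c d h q ih => exact (key u a.1 c.1 a.2 c.2 h).trans ih
  have hψconst : ∀ (u : U) (x y : V), x ∈ B u → y ∈ B u → ψ x = ψ y := by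
    intro u x y hx hy
    obtain ⟨p⟩ := (hconn u).preconnected ⟨x, hx⟩ ⟨y, hy⟩
    exact hψwalk u ⟨x, hx⟩ ⟨y, hy⟩ p
  -- the completion for H
  refine ⟨Y'.submatrix r r, hY'psd.submatrix r, ?_, ?_, ?_⟩
  · -- rank
    have h1 : ((1 : Matrix V V ℝ).submatrix r (Equiv.refl V)) * Y'
        = Y'.submatrix r id := by
      rw [one_submatrix_mul]
      rfl
    have h2 : (Y'.submatrix r id) * ((1 : Matrix V V ℝ).submatrix (Equiv.refl V) r)
        = Y'.submatrix r r := by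
      rw [mul_submatrix_one]
      rfl
    calc (Y'.submatrix r r).rank
        = ((((1 : Matrix V V ℝ).submatrix r (Equiv.refl V)) * Y')
            * ((1 : Matrix V V ℝ).submatrix (Equiv.refl V) r)).rank := by rw [h1, h2]
      _ ≤ (((1 : Matrix V V ℝ).submatrix r (Equiv.refl V)) * Y').rank :=
          rank_mul_le_left _ _
      _ ≤ Y'.rank := rank_mul_le_right _ _
      _ ≤ gd G := hY'rank
  · intro u
    show Y' (r u) (r u) = X u u
    rw [hY'diag, hZapp, hφ (hrB u), hXapp]
  · intro u u' huu'
    obtain ⟨x, hx, y, hy, hxy⟩ := hedge u u' huu'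
    show Y' (r u) (r u') = X u u'
    rw [hY'app, hψconst u (r u) x (hrB u) hx, hψconst u' (r u') y (hrB u') hy,
      ← hY'app, hY'edge x y hxy, hZapp, hφ hx, hφ hy, hXapp]

private lemma induce_singleton_connected {V : Type} (G : SimpleGraph V) (u : V) :
    (G.induce ({u} : Set V)).Connected := by
  haveI : Nonempty ({u} : Set V) := ⟨⟨u, rfl⟩⟩
  refine ⟨fun x y => ?_⟩
  have : x = y := by
    obtain ⟨x, hx⟩ := x; obtain ⟨y, hy⟩ := y
    simp only [Set.mem_singleton_iff] at hx hy
    subst hx; subst hy; rfl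
  exact this ▸ SimpleGraph.Reachable.refl x

private lemma induce_pair_connected {V : Type} {G : SimpleGraph V} {a b : V}
    (hab : G.Adj a b) : (G.induce ({a, b} : Set V)).Connected := by
  have ha : a ∈ ({a, b} : Set V) := Or.inl rfl
  have hb : b ∈ ({a, b} : Set V) := Or.inr rfl
  have hadj : (G.induce ({a, b} : Set V)).Adj ⟨a, ha⟩ ⟨b, hb⟩ := hab
  haveI : Nonempty ({a, b} : Set V) := ⟨⟨a, ha⟩⟩
  refine ⟨fun x y => ?_⟩
  obtain ⟨x, hx⟩ := x; obtain ⟨y, hy⟩ := y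
  have hreach : ∀ (z : V) (hz : z ∈ ({a, b} : Set V)),
      (G.induce ({a, b} : Set V)).Reachable ⟨a, ha⟩ ⟨z, hz⟩ := by
    intro z hz
    rcases hz with hz | hz
    · subst hz; exact SimpleGraph.Reachable.refl _
    · subst hz; exact hadj.reachable
  exact (hreach x hx).symm.trans (hreach y hy)

private lemma deleteEdges_isMinor {V : Type} (G : SimpleGraph V) (s : Set (Sym2 V)) :
    IsMinorOf (G.deleteEdges s) G := by
  refine ⟨fun u => {u}, fun u => ⟨u, rfl⟩, fun u => induce_singleton_connected G u,
    fun u u' h => Set.disjoint_singleton.mpr h, ?_⟩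
  intro u u' h
  exact ⟨u, rfl, u', rfl, (SimpleGraph.deleteEdges_adj.mp h).1⟩

private lemma contractEdge_isMinor {V : Type} [DecidableEq V] (G : SimpleGraph V) (a b : V)
    (hab : G.Adj a b) : IsMinorOf (contractEdge G a b) G := by
  classical
  set B : {v : V // v ≠ b} → Set V := fun u => if u.1 = a then {a, b} else {u.1} with hB
  have hmem : ∀ u, u.1 ∈ B u := by
    intro u
    simp only [hB]
    split_ifs with h
    · exact Or.inl h
    · rfl
  have hsub : ∀ u (x : V), x ∈ B u → x = u.1 ∨ (u.1 = a ∧ x = b) := by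
    intro u x hx
    by_cases h : u.1 = a
    · simp only [hB, if_pos h] at hx
      rcases hx with hx | hx
      · exact Or.inl (by rw [hx, h])
      · exact Or.inr ⟨h, hx⟩
    · simp only [hB, if_neg h] at hx
      exact Or.inl hx
  refine ⟨B, fun u => ⟨u.1, hmem u⟩, ?_, ?_, ?_⟩
  · intro u
    by_cases h : u.1 = a
    · have hBu : B u = ({a, b} : Set V) := by simp only [hB]; rw [if_pos h]
      rw [hBu]
      exact induce_pair_connected hab
    · have hBu : B u = ({u.1} : Set V) := by simp only [hB]; rw [if_neg h]
      rw [hBu]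
      exact induce_singleton_connected G u.1
  · intro u u' huu'
    rw [Set.disjoint_left]
    intro x hx hx'
    rcases hsub u x hx with h1 | ⟨h1, h1'⟩ <;> rcases hsub u' x hx' with h2 | ⟨h2, h2'⟩
    · exact huu' (Subtype.ext (h1.symm.trans h2))
    · exact u.2 (h1.symm.trans h2')
    · exact u'.2 (h2.symm.trans h1')
    · exact huu' (Subtype.ext (h1.trans h2.symm))
  · rintro u u' ⟨hne, hadj | ⟨h1, h2⟩ | ⟨h1, h2⟩⟩
    · exact ⟨u.1, hmem u, u'.1, hmem u', hadj⟩
    · have : b ∈ B u := by simp [hB, h1]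
      exact ⟨b, this, u'.1, hmem u', h2.symm⟩
    · have : b ∈ B u' := by simp [hB, h1]
      exact ⟨u.1, hmem u, b, this, h2⟩

/-- If a graph `H` is a minor of a graph `G`, then `gd(H) ≤ gd(G)`. In particular, the
graph parameter `gd` is monotone nondecreasing under edge deletion and edge contraction. -/
theorem gd_minor_monotone :
    (∀ {U V : Type} [Fintype U] [Fintype V] (H : SimpleGraph U) (G : SimpleGraph V),
        IsMinorOf H G → gd H ≤ gd G) ∧
    (∀ {V : Type} [Fintype V] (G : SimpleGraph V) (s : Set (Sym2 V)),
        gd (G.deleteEdges s) ≤ gd G) ∧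
    (∀ {V : Type} [Fintype V] [DecidableEq V] (G : SimpleGraph V) (a b : V),
        G.Adj a b → gd (contractEdge G a b) ≤ gd G) := by
  refine ⟨fun H G hm => gd_minor_le H G hm, fun G s => ?_, fun G a b hab => ?_⟩
  · exact gd_minor_le _ G (deleteEdges_isMinor G s)
  · exact gd_minor_le _ G (contractEdge_isMinor G a b hab)
end

section
/- If a graph G is the clique sum of two graphs G1 and G2, then gd(G) = max{gd(G1), gd(G2)}. -/
open Matrix Finset

open Module
open scoped RealInnerProductSpace


section Aux

variable {E : Type*} [NormedAddCommGroup E] [InnerProductSpace ℝ E]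

private lemma inner_lc {ι : Type*} [Fintype ι] (v : ι → E) (c c' : ι → ℝ) :
    ⟪(∑ i, c i • v i), (∑ j, c' j • v j)⟫ = ∑ i, ∑ j, c i * c' j * ⟪v i, v j⟫ := by
  rw [sum_inner]
  refine Finset.sum_congr rfl fun i _ => ?_
  rw [inner_sum]
  refine Finset.sum_congr rfl fun j _ => ?_
  rw [real_inner_smul_left, real_inner_smul_right]
  ring

/-- Two families with equal Gram matrices are related by a linear isometry. -/
private lemma exists_isometry_family [FiniteDimensional ℝ E] {ι : Type*} [Fintype ι]
    (f g : ι → E) (h : ∀ i j, ⟪g i, g j⟫ = ⟪f i, f j⟫) :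
    ∃ O : E →ₗᵢ[ℝ] E, ∀ i, O (g i) = f i := by
  classical
  set φ : (ι → ℝ) →ₗ[ℝ] E := Fintype.linearCombination ℝ g with hφ
  set ψ : (ι → ℝ) →ₗ[ℝ] E := Fintype.linearCombination ℝ f with hψ
  have key : ∀ c c' : ι → ℝ, ⟪ψ c, ψ c'⟫ = ⟪φ c, φ c'⟫ := by
    intro c c'
    rw [hφ, hψ]
    simp only [Fintype.linearCombination_apply]
    rw [inner_lc, inner_lc]
    exact Finset.sum_congr rfl fun i _ => Finset.sum_congr rfl fun j _ => by rw [h]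
  set M : Submodule ℝ E := LinearMap.range φ with hM
  obtain ⟨s, hs⟩ := φ.rangeRestrict.exists_rightInverse_of_surjective
    (LinearMap.range_eq_top.2 (LinearMap.surjective_rangeRestrict φ))
  have hφs : ∀ m : M, φ (s m) = (m : E) := by
    intro m
    have := congrArg (fun u => (u m : E)) hs
    simpa using this
  set T0 : M →ₗ[ℝ] E := ψ.comp s with hT0
  have hT0inner : ∀ m m' : M, ⟪T0 m, T0 m'⟫ = ⟪m, m'⟫ := by
    intro m m'
    rw [hT0]
    simp only [LinearMap.comp_apply]
    rw [key, hφs, hφs, Submodule.coe_inner]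
  have hT0norm : ∀ m : M, ‖T0 m‖ = ‖m‖ := by
    intro m
    rw [norm_eq_sqrt_real_inner (T0 m), norm_eq_sqrt_real_inner m, hT0inner]
  set T : M →ₗᵢ[ℝ] E := ⟨T0, hT0norm⟩ with hT
  refine ⟨T.extend, fun i => ?_⟩
  have hgi : g i ∈ M := ⟨Pi.single i 1, by simp [hφ]⟩
  have : T.extend (g i) = T ⟨g i, hgi⟩ := T.extend_apply ⟨g i, hgi⟩
  rw [this]
  have hc : φ (s ⟨g i, hgi⟩) = φ (Pi.single i 1) := by
    rw [hφs]; simp [hφ]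
  have hzero : ψ (s ⟨g i, hgi⟩ - Pi.single i 1) = 0 := by
    have h1 : ⟪ψ (s ⟨g i, hgi⟩ - Pi.single i 1), ψ (s ⟨g i, hgi⟩ - Pi.single i 1)⟫ = 0 := by
      rw [key]
      rw [map_sub, hc, sub_self, inner_zero_left]
    exact inner_self_eq_zero.1 h1
  have : ψ (s ⟨g i, hgi⟩) = ψ (Pi.single i 1) := by
    rw [map_sub] at hzero
    exact sub_eq_zero.1 hzero
  show T0 _ = f i
  rw [hT0]
  simp only [LinearMap.comp_apply]
  rw [this, hψ]
  simp

/-- A finite-dimensional real inner product space of dimension at most `k` embeds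
isometrically into `EuclideanSpace ℝ (Fin k)`. -/
private lemma exists_isometry_euclidean (M : Type*) [NormedAddCommGroup M]
    [InnerProductSpace ℝ M] [FiniteDimensional ℝ M] {k : ℕ} (h : finrank ℝ M ≤ k) :
    Nonempty (M →ₗᵢ[ℝ] EuclideanSpace ℝ (Fin k)) := by
  classical
  set d := finrank ℝ M with hd
  set o := stdOrthonormalBasis ℝ M with ho
  set w : Fin d → EuclideanSpace ℝ (Fin k) :=
    fun i => EuclideanSpace.single (Fin.castLE h i) 1 with hw
  have hwo : Orthonormal ℝ w := by
    have := (EuclideanSpace.basisFun (Fin k) ℝ).orthonormal.comp (Fin.castLE h)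
      (Fin.castLE_injective h)
    convert this using 1
    · rfl
    funext i
    rw [hw, Function.comp_apply, EuclideanSpace.basisFun_apply]
  set S : M →ₗ[ℝ] EuclideanSpace ℝ (Fin k) :=
    (Fintype.linearCombination ℝ w).comp ((WithLp.linearEquiv 2 ℝ (Fin d → ℝ)).toLinearMap.comp o.repr.toLinearEquiv.toLinearMap) with hS
  have hSapp : ∀ x : M, S x = ∑ i, o.repr x i • w i := fun x => rfl
  refine ⟨⟨S, fun x => ?_⟩⟩
  rw [norm_eq_sqrt_real_inner (S x), norm_eq_sqrt_real_inner x]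
  congr 1
  rw [hSapp, inner_lc]
  have : ∀ i j : Fin d, ⟪w i, w j⟫ = if i = j then 1 else 0 := fun i j => by
    rcases eq_or_ne i j with rfl | hij
    · rw [if_pos rfl, real_inner_self_eq_norm_sq, hwo.1 i]; norm_num
    · rw [if_neg hij]; exact hwo.2 hij
  calc (∑ i, ∑ j, o.repr x i * o.repr x j * ⟪w i, w j⟫)
      = ∑ i, o.repr x i * o.repr x i := by
        refine Finset.sum_congr rfl fun i _ => ?_
        rw [Finset.sum_eq_single i]
        · simp [this, hwo.1 i]
        · intro j _ hj; simp [this, (Ne.symm hj : ¬ i = j)]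
        · simp
    _ = ⟪o.repr x, o.repr x⟫ := by
        rw [PiLp.inner_apply]
        simp [RCLike.inner_apply, sq]
    _ = ⟪x, x⟫ := o.repr.inner_map_map x x |>.symm ▸ (o.repr.inner_map_map x x)

end Aux

section Gram

variable {V : Type} [Fintype V]

/-- The Gram matrix of a family of vectors in `EuclideanSpace ℝ (Fin k)` is positive
semidefinite of rank at most `k`. -/
private lemma gram_posSemidef_rank {k : ℕ} (h : V → EuclideanSpace ℝ (Fin k)) :
    (Matrix.of fun i j => (⟪h i, h j⟫ : ℝ)).PosSemidef ∧
      (Matrix.of fun i j => (⟪h i, h j⟫ : ℝ)).rank ≤ k := by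
  classical
  set B : Matrix (Fin k) V ℝ := Matrix.of fun r i => h i r with hB
  have hGram : (Matrix.of fun i j => (⟪h i, h j⟫ : ℝ)) = Bᴴ * B := by
    ext i j
    simp [Matrix.mul_apply, hB, Matrix.conjTranspose_apply, PiLp.inner_apply,
      RCLike.inner_apply, conj_trivial, mul_comm]
  constructor
  · rw [hGram]; exact Matrix.posSemidef_conjTranspose_mul_self B
  · rw [hGram, Matrix.rank_conjTranspose_mul_self]
    exact le_trans B.rank_le_card_height (by simp)

open scoped MatrixOrder in
/-- A positive semidefinite matrix of rank at most `k` is the Gram matrix of a family of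
vectors in `EuclideanSpace ℝ (Fin k)`. -/
private lemma exists_gram_vectors [DecidableEq V] {X : Matrix V V ℝ}
    (hX : X.PosSemidef) {k : ℕ} (hr : X.rank ≤ k) :
    ∃ f : V → EuclideanSpace ℝ (Fin k), ∀ i j, (⟪f i, f j⟫ : ℝ) = X i j := by
  set B := CFC.sqrt X with hB
  have hBpsd : B.PosSemidef := (CFC.sqrt_nonneg X).posSemidef
  have hBH : Bᴴ = B := hBpsd.1
  have hBB : Bᴴ * B = X := by rw [hBH]; exact CFC.sqrt_mul_sqrt_self X hX.nonneg
  have hrankB : B.rank ≤ k := by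
    have h2 := Matrix.rank_conjTranspose_mul_self B
    rw [hBB] at h2
    rw [← h2]; exact hr
  set L : (V → ℝ) →ₗ[ℝ] EuclideanSpace ℝ V :=
    ((WithLp.linearEquiv 2 ℝ (V → ℝ)).symm.toLinearMap).comp B.mulVecLin with hL
  have hfin : finrank ℝ (LinearMap.range L) ≤ k := by
    rw [hL, LinearMap.range_comp, LinearEquiv.finrank_map_eq]
    exact hrankB
  obtain ⟨ψ⟩ := exists_isometry_euclidean (LinearMap.range L) hfin
  have hLval : ∀ (i : V) (r : V), (L (Pi.single i 1) : EuclideanSpace ℝ V) r = B r i := by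
    intro i r
    rw [hL]
    simp only [LinearMap.comp_apply, LinearEquiv.coe_coe, WithLp.linearEquiv_symm_apply,
      Matrix.mulVecLin_apply]
    show (B *ᵥ Pi.single i 1) r = B r i
    rw [Matrix.mulVec_single]
    exact mul_one _
  refine ⟨fun i => ψ ⟨L (Pi.single i 1), LinearMap.mem_range_self L _⟩, fun i j => ?_⟩
  rw [ψ.inner_map_map, Submodule.coe_inner]
  rw [← hBB, Matrix.mul_apply]
  rw [PiLp.inner_apply]
  refine Finset.sum_congr rfl fun r _ => ?_
  rw [RCLike.inner_apply, conj_trivial]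
  show (L (Pi.single j 1)) r * (L (Pi.single i 1)) r = _
  rw [hLval, hLval, Matrix.conjTranspose_apply]
  simp [mul_comm]

end Gram

section GD

variable {V : Type} [Fintype V]

/-- The defining set for `gd`. -/
private def GS (G : SimpleGraph V) : Set ℕ :=
  {k : ℕ | 1 ≤ k ∧ ∀ X : Matrix V V ℝ, X.PosSemidef →
    ∃ Y : Matrix V V ℝ, Y.PosSemidef ∧ Y.rank ≤ k ∧
      (∀ i, Y i i = X i i) ∧ (∀ i j, G.Adj i j → Y i j = X i j)}

private lemma GS_nonempty (G : SimpleGraph V) : (GS G).Nonempty := by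
  refine ⟨max 1 (Fintype.card V), le_max_left _ _, fun X hX => ⟨X, hX, ?_, fun _ => rfl,
    fun _ _ _ => rfl⟩⟩
  exact X.rank_le_card_width.trans (le_max_right _ _)

private lemma gd_mem_s1 (G : SimpleGraph V) : gd G ∈ GS G :=
  Nat.sInf_mem (GS_nonempty G)

end GD

/-- If a graph `G` is the clique sum of two graphs `G1` and `G2` (glued along the clique
`V1 ∩ V2`), then `gd(G) = max {gd(G1), gd(G2)}`. -/
theorem gd_cliqueSum {W : Type} [Fintype W] (G G1 G2 : SimpleGraph W) (V1 V2 : Set W)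
    (hcover : V1 ∪ V2 = Set.univ)
    (hE1 : ∀ i j, G1.Adj i j → i ∈ V1 ∧ j ∈ V1)
    (hE2 : ∀ i j, G2.Adj i j → i ∈ V2 ∧ j ∈ V2)
    (hclique1 : G1.IsClique (V1 ∩ V2))
    (hclique2 : G2.IsClique (V1 ∩ V2))
    (hG : G = G1 ⊔ G2) :
    gd G = max (gd G1) (gd G2) := by
  classical
  refine le_antisymm ?_ ?_
  · -- gd G ≤ max (gd G1) (gd G2)
    refine Nat.sInf_le ?_
    set m := max (gd G1) (gd G2) with hm
    refine ⟨(gd_mem_s1 G1).1.trans (le_max_left _ _), fun X hX => ?_⟩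
    obtain ⟨Y1, hY1psd, hY1rank, hY1diag, hY1edge⟩ := (gd_mem_s1 G1).2 X hX
    obtain ⟨Y2, hY2psd, hY2rank, hY2diag, hY2edge⟩ := (gd_mem_s1 G2).2 X hX
    obtain ⟨f, hf⟩ := exists_gram_vectors hY1psd (hY1rank.trans (le_max_left _ _))
    obtain ⟨g, hg⟩ := exists_gram_vectors hY2psd (hY2rank.trans (le_max_right _ _))
    -- the two families have the same Gram matrix on the clique `V1 ∩ V2`
    have hY12 : ∀ p q : W, p ∈ V1 ∩ V2 → q ∈ V1 ∩ V2 → Y2 p q = Y1 p q := by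
      intro p q hp hq
      rcases eq_or_ne p q with rfl | hne
      · rw [hY2diag, hY1diag]
      · rw [hY2edge p q (hclique2 hp hq hne), hY1edge p q (hclique1 hp hq hne)]
    have hagree : ∀ p q : {x : W // x ∈ V1 ∩ V2},
        (⟪g p.1, g q.1⟫ : ℝ) = ⟪f p.1, f q.1⟫ := by
      intro p q
      rw [hf, hg, hY12 p.1 q.1 p.2 q.2]
    obtain ⟨O, hO⟩ := exists_isometry_family (fun p : {x : W // x ∈ V1 ∩ V2} => f p.1)
      (fun p => g p.1) hagree
    set h : W → EuclideanSpace ℝ (Fin m) := fun w => if w ∈ V1 then f w else O (g w) with hh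
    have hhV1 : ∀ w ∈ V1, h w = f w := fun w hw => by rw [hh]; simp [hw]
    have hhV2 : ∀ w ∈ V2, h w = O (g w) := by
      intro w hw
      by_cases hw1 : w ∈ V1
      · rw [hh]
        simp only [hw1, if_true]
        exact (hO ⟨w, ⟨hw1, hw⟩⟩).symm
      · rw [hh]; simp [hw1]
    refine ⟨Matrix.of fun i j => (⟪h i, h j⟫ : ℝ), (gram_posSemidef_rank h).1,
      (gram_posSemidef_rank h).2, ?_, ?_⟩
    · intro i
      by_cases hi : i ∈ V1
      · show (⟪h i, h i⟫ : ℝ) = X i i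
        rw [hhV1 i hi, hf, hY1diag]
      · have hi2 : i ∈ V2 := by
          have : i ∈ V1 ∪ V2 := hcover.symm ▸ Set.mem_univ i
          exact this.resolve_left hi
        show (⟪h i, h i⟫ : ℝ) = X i i
        rw [hhV2 i hi2, O.inner_map_map, hg, hY2diag]
    · intro i j hadj
      rw [hG] at hadj
      rcases hadj with h1 | h2
      · obtain ⟨hi, hj⟩ := hE1 i j h1
        show (⟪h i, h j⟫ : ℝ) = X i j
        rw [hhV1 i hi, hhV1 j hj, hf, hY1edge i j h1]
      · obtain ⟨hi, hj⟩ := hE2 i j h2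
        show (⟪h i, h j⟫ : ℝ) = X i j
        rw [hhV2 i hi, hhV2 j hj, O.inner_map_map, hg, hY2edge i j h2]
  · -- max (gd G1) (gd G2) ≤ gd G
    have key : ∀ G' : SimpleGraph W, (∀ i j, G'.Adj i j → G.Adj i j) → gd G' ≤ gd G := by
      intro G' hsub
      refine Nat.sInf_le ⟨(gd_mem_s1 G).1, fun X hX => ?_⟩
      obtain ⟨Y, a, b, c, d⟩ := (gd_mem_s1 G).2 X hX
      exact ⟨Y, a, b, c, fun i j hij => d i j (hsub i j hij)⟩
    exact max_le (key G1 fun i j hij => hG ▸ Or.inl hij) (key G2 fun i j hij => hG ▸ Or.inr hij)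
end

section
/- If G is a partial k-tree (equivalently, a graph of treewidth at most k), then gd(G) ≤ k + 1. -/
open Matrix Finset SimpleGraph

set_option linter.unusedSectionVars false

local notation "⟪" x ", " y "⟫" => @inner ℝ _ _ x y

section GramIsometry

variable {m : ℕ} {α : Type} [Fintype α] [DecidableEq α]

private noncomputable def sumMap (f : α → EuclideanSpace ℝ (Fin m)) :
    (α → ℝ) →ₗ[ℝ] EuclideanSpace ℝ (Fin m) where
  toFun c := ∑ a, c a • f a
  map_add' x y := by simp [add_smul, Finset.sum_add_distrib]
  map_smul' r x := by simp [smul_smul, Finset.smul_sum]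

private lemma sumMap_single (f : α → EuclideanSpace ℝ (Fin m)) (a : α) :
    sumMap f (Pi.single a 1) = f a := by
  simp only [sumMap, LinearMap.coe_mk, AddHom.coe_mk]
  rw [Finset.sum_eq_single a]
  · simp
  · intro b _ hb; simp [Pi.single_apply, hb]
  · simp

private lemma inner_sumMap (f : α → EuclideanSpace ℝ (Fin m)) (c d : α → ℝ) :
    ⟪sumMap f c, sumMap f d⟫ = ∑ a, ∑ b, c a * d b * ⟪f a, f b⟫ := by
  simp only [sumMap, LinearMap.coe_mk, AddHom.coe_mk]
  rw [sum_inner]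
  refine Finset.sum_congr rfl fun a _ => ?_
  rw [inner_sum]
  refine Finset.sum_congr rfl fun b _ => ?_
  rw [real_inner_smul_left, real_inner_smul_right]
  ring

/-- Two finite families with the same Gram matrix are related by a linear isometry. -/
theorem exists_isometry_of_gram_eq (f g : α → EuclideanSpace ℝ (Fin m))
    (hfg : ∀ a b, ⟪f a, f b⟫ = ⟪g a, g b⟫) :
    ∃ O : EuclideanSpace ℝ (Fin m) →ₗᵢ[ℝ] EuclideanSpace ℝ (Fin m), ∀ a, O (f a) = g a := by
  set F : (α → ℝ) →ₗ[ℝ] EuclideanSpace ℝ (Fin m) := sumMap f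
  set G : (α → ℝ) →ₗ[ℝ] EuclideanSpace ℝ (Fin m) := sumMap g
  have hinner : ∀ c d, ⟪F c, F d⟫ = ⟪G c, G d⟫ := by
    intro c d
    rw [inner_sumMap, inner_sumMap]
    exact Finset.sum_congr rfl fun a _ => Finset.sum_congr rfl fun b _ => by rw [hfg]
  have hker : LinearMap.ker F ≤ LinearMap.ker G := by
    intro c hc
    have : ⟪G c, G c⟫ = (0 : ℝ) := by rw [← hinner]; simp [LinearMap.mem_ker.mp hc]
    simpa [LinearMap.mem_ker] using inner_self_eq_zero.mp this
  -- factor G through the quotient by ker F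
  set T₀ : ((α → ℝ) ⧸ LinearMap.ker F) →ₗ[ℝ] EuclideanSpace ℝ (Fin m) := (LinearMap.ker F).liftQ G hker
  set e := F.quotKerEquivRange with he
  set T : (LinearMap.range F) →ₗ[ℝ] EuclideanSpace ℝ (Fin m) := T₀ ∘ₗ (e.symm : LinearMap.range F →ₗ[ℝ] _)
  have hT : ∀ c : α → ℝ, ∀ h, T ⟨F c, h⟩ = G c := by
    intro c h
    have h1 : e.symm ⟨F c, h⟩ = Submodule.Quotient.mk c := by
      have h0 := F.quotKerEquivRange_symm_apply_image c h
      rw [h0, Submodule.mkQ_apply]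
    simp only [T, LinearMap.comp_apply, LinearEquiv.coe_coe, h1]
    simp [T₀, Submodule.liftQ_apply]
  have hTnorm : ∀ x : LinearMap.range F, ‖T x‖ = ‖x‖ := by
    rintro ⟨x, hx⟩
    obtain ⟨c, rfl⟩ := hx
    rw [hT c ⟨c, rfl⟩]
    have : ⟪G c, G c⟫ = ⟪F c, F c⟫ := (hinner c c).symm
    have h2 := congrArg Real.sqrt this
    rwa [real_inner_self_eq_norm_mul_norm, real_inner_self_eq_norm_mul_norm,
      Real.sqrt_mul_self (norm_nonneg _), Real.sqrt_mul_self (norm_nonneg _)] at h2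
  set Ti : (LinearMap.range F) →ₗᵢ[ℝ] EuclideanSpace ℝ (Fin m) := ⟨T, hTnorm⟩
  refine ⟨Ti.extend, fun a => ?_⟩
  have hmem : f a ∈ LinearMap.range F := ⟨Pi.single a 1, sumMap_single f a⟩
  have h3 : (⟨f a, hmem⟩ : LinearMap.range F) = ⟨F (Pi.single a 1), LinearMap.mem_range_self _ _⟩ :=
    Subtype.ext (sumMap_single f a).symm
  calc Ti.extend (f a) = Ti ⟨f a, hmem⟩ := Ti.extend_apply ⟨f a, hmem⟩
    _ = g a := by
        rw [show Ti ⟨f a, hmem⟩ = T ⟨f a, hmem⟩ from rfl, h3, hT]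
        exact sumMap_single g a

end GramIsometry

section GramRep

variable {m : ℕ} {α : Type} [Fintype α] [DecidableEq α]

/-- A PSD matrix of size at most `m` has a Gram representation in `ℝ^m`. -/
theorem exists_gram_rep (M : Matrix α α ℝ) (hM : M.PosSemidef) (hcard : Fintype.card α ≤ m) :
    ∃ f : α → EuclideanSpace ℝ (Fin m), ∀ a b, ⟪f a, f b⟫ = M a b := by
  obtain ⟨e⟩ : Nonempty (α ↪ Fin m) := by
    apply Function.Embedding.nonempty_of_card_le
    simpa using hcard
  obtain ⟨S, hSsa, -, hmul⟩ := (open scoped MatrixOrder in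
    CFC.exists_sqrt_of_isSelfAdjoint_of_quasispectrumRestricts (A := Matrix α α ℝ) hM.isHermitian
      (QuasispectrumRestricts.nnreal_of_nonneg hM.nonneg))
  have hsymm : Sᵀ = S := by
    have := hSsa.star_eq
    simpa [Matrix.star_eq_conjTranspose, Matrix.conjTranspose_eq_transpose_of_trivial] using this
  set f : α → EuclideanSpace ℝ (Fin m) :=
    fun a => (WithLp.equiv 2 (Fin m → ℝ)).symm (fun j => ∑ c, if e c = j then S c a else 0)
    with hf
  refine ⟨f, fun a b => ?_⟩
  have h1 : ⟪f a, f b⟫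
      = ∑ j, (∑ c, if e c = j then S c a else 0) * (∑ c, if e c = j then S c b else 0) := by
    rw [PiLp.inner_apply]
    refine Finset.sum_congr rfl fun j _ => ?_
    rw [hf]
    simp only [WithLp.equiv_symm_apply, WithLp.ofLp_toLp, RCLike.inner_apply, conj_trivial]
    exact mul_comm _ _
  rw [h1]
  have h2 : ∀ j : Fin m, (∑ c, if e c = j then S c a else 0) * (∑ c, if e c = j then S c b else 0)
      = ∑ c, ∑ c', (if e c = j then S c a else 0) * (if e c' = j then S c' b else 0) :=
    fun j => Finset.sum_mul_sum _ _ _ _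
  rw [Finset.sum_congr rfl fun j _ => h2 j, Finset.sum_comm]
  have h3 : ∀ c : α, ∑ j : Fin m, ∑ c',
      (if e c = j then S c a else 0) * (if e c' = j then S c' b else 0) = S c a * S c b := by
    intro c
    rw [Finset.sum_comm]
    have h4 : ∀ c', ∑ j : Fin m, (if e c = j then S c a else 0) * (if e c' = j then S c' b else 0)
        = if c' = c then S c a * S c' b else 0 := by
      intro c'
      have : ∀ j : Fin m, (if e c = j then S c a else 0) * (if e c' = j then S c' b else 0)
          = if e c = j then (if e c' = j then S c a * S c' b else 0) else 0 := by
        intro j; split_ifs <;> ring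
      rw [Finset.sum_congr rfl fun j _ => this j, Finset.sum_ite_eq]
      simp only [Finset.mem_univ, if_true]
      by_cases hc : c' = c
      · subst hc; simp
      · have : e c' ≠ e c := fun h => hc (e.injective h)
        simp [this, hc]
    rw [Finset.sum_congr rfl fun c' _ => h4 c', Finset.sum_ite_eq']
    simp
  rw [Finset.sum_congr rfl fun c _ => h3 c]
  calc ∑ c, S c a * S c b = ∑ c, S a c * S c b := by
        refine Finset.sum_congr rfl fun c _ => ?_
        have := congrFun (congrFun hsymm c) a
        simp only [Matrix.transpose_apply] at this
        rw [← this]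
    _ = M a b := by rw [← hmul]; simp [Matrix.mul_apply]
end GramRep

section Assemble

variable {V : Type} [Fintype V] {m : ℕ}

theorem gram_matrix_psd_rank (g : V → EuclideanSpace ℝ (Fin m)) :
    ∃ Y : Matrix V V ℝ, Y.PosSemidef ∧ Y.rank ≤ m ∧ ∀ u v, Y u v = ⟪g u, g v⟫ := by
  classical
  set B : Matrix (Fin m) V ℝ := Matrix.of (fun t v => g v t) with hB
  refine ⟨Bᴴ * B, Matrix.posSemidef_conjTranspose_mul_self B, ?_, fun u v => ?_⟩
  · calc (Bᴴ * B).rank ≤ B.rank := Matrix.rank_mul_le_right _ _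
      _ ≤ Fintype.card (Fin m) := Matrix.rank_le_card_height B
      _ = m := Fintype.card_fin m
  · rw [Matrix.mul_apply, PiLp.inner_apply]
    refine Finset.sum_congr rfl fun t _ => ?_
    simp [hB, Matrix.conjTranspose_apply, RCLike.inner_apply, mul_comm]

end Assemble

variable {I : Type} {T : SimpleGraph I}

/-- Concatenating a fresh vertex to a path gives a path. -/
lemma Walk_isPath_concat {u v w : I} {p : T.Walk u v} (hp : p.IsPath) (h : T.Adj v w)
    (hw : w ∉ p.support) : (p.concat h).IsPath := by
  rw [← Walk.isPath_reverse_iff, Walk.reverse_concat]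
  rw [Walk.cons_isPath_iff]
  refine ⟨Walk.isPath_reverse_iff p |>.mpr hp, ?_⟩
  rw [Walk.support_reverse, List.mem_reverse]
  exact hw

/-- In a tree, a walk between two endpoints with support in a set, turned into the
unique path. -/
lemma tree_path_unique (hT : T.IsTree) {a b : I} (p q : T.Walk a b)
    (hp : p.IsPath) (hq : q.IsPath) : p = q :=
  ((hT.existsUnique_path a b).unique hp hq)

/-- A connected finite subset of a tree with at least two elements has a leaf. -/
lemma tree_exists_leaf [DecidableEq I] (hT : T.IsTree) (J : Finset I)
    (hconn : ∀ a ∈ J, ∀ b ∈ J, ∃ w : T.Walk a b, ∀ x ∈ w.support, x ∈ J)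
    (h2 : 2 ≤ J.card) :
    ∃ j ∈ J, ∃ p ∈ J.erase j, T.Adj j p ∧ (∀ w ∈ J, T.Adj j w → w = p) ∧
      (∀ a ∈ J.erase j, ∀ b ∈ J.erase j,
        ∃ w : T.Walk a b, ∀ x ∈ w.support, x ∈ J.erase j) := by
  classical
  obtain ⟨j₀, hj₀⟩ : J.Nonempty := Finset.card_pos.mp (by omega)
  -- canonical paths from j₀
  have hP : ∀ b : {x // x ∈ J}, ∃ w : T.Walk j₀ b.1, w.IsPath ∧ ∀ x ∈ w.support, x ∈ J := by
    rintro ⟨b, hb⟩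
    obtain ⟨w, hw⟩ := hconn j₀ hj₀ b hb
    exact ⟨w.bypass, w.bypass_isPath, fun x hx => hw x (w.support_bypass_subset hx)⟩
  choose P hPpath hPsupp using hP
  obtain ⟨j, hjmem, hjmax⟩ := J.attach.exists_max_image (fun b => (P b).length) ⟨⟨j₀, hj₀⟩, Finset.mem_attach _ _⟩
  -- j has some neighbor in J
  -- key claim : any J-neighbor w of j satisfies : concat representation
  have key : ∀ w : {x // x ∈ J}, T.Adj j.1 w.1 →
      ∃ h' : T.Adj w.1 j.1, j.1 ∉ (P w).support ∧ (P w).concat h' = P j := by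
    intro w hadj
    refine ⟨hadj.symm, ?_⟩
    have hnotmem : j.1 ∉ (P w).support := by
      intro hmem
      have hA : ((P w).takeUntil j.1 hmem).IsPath := (hPpath w).takeUntil hmem
      have hAsupp : ∀ x ∈ ((P w).takeUntil j.1 hmem).support, x ∈ J :=
        fun x hx => hPsupp w x ((P w).support_takeUntil_subset hmem hx)
      have hAeq : (P w).takeUntil j.1 hmem = P j := tree_path_unique hT _ _ hA (hPpath j)
      have hdrop : ((P w).dropUntil j.1 hmem).length ≠ 0 := by
        intro h0
        exact hadj.ne (Walk.eq_of_length_eq_zero (p := (P w).dropUntil j.1 hmem) h0)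
      have hlen : (P w).length = ((P w).takeUntil j.1 hmem).length
          + ((P w).dropUntil j.1 hmem).length := by
        conv_lhs => rw [← (P w).take_spec hmem]
        rw [Walk.length_append]
      have hmax := hjmax w (Finset.mem_attach _ _)
      rw [hAeq] at hlen
      omega
    refine ⟨hnotmem, ?_⟩
    apply tree_path_unique hT
    · exact Walk_isPath_concat (hPpath w) hadj.symm hnotmem
    · exact hPpath j
  -- find some neighbor p of j in J
  obtain ⟨b, hbJ, hbj⟩ : ∃ b ∈ J, b ≠ j.1 := by
    by_contra hno
    push_neg at hno
    have : J ⊆ {j.1} := fun x hx => Finset.mem_singleton.mpr (hno x hx)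
    have := Finset.card_le_card this
    simp at this
    omega
  obtain ⟨wjb, hwjb⟩ := hconn j.1 j.2 b hbJ
  have hjb : j.1 ≠ b := fun h => hbj h.symm
  obtain ⟨x, hx, wjb', rfl⟩ := Walk.exists_eq_cons_of_ne hjb wjb
  have hxJ : x ∈ J := hwjb x (by simp [Walk.support_cons])
  -- uniqueness of the neighbor
  have huniq : ∀ w ∈ J, T.Adj j.1 w → w = x := by
    intro w hwJ hadjw
    obtain ⟨h1, hn1, hc1⟩ := key ⟨w, hwJ⟩ hadjw
    obtain ⟨h2', hn2, hc2⟩ := key ⟨x, hxJ⟩ hx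
    have heq : (P ⟨w, hwJ⟩).concat h1 = (P ⟨x, hxJ⟩).concat h2' := by rw [hc1, hc2]
    have := congrArg Walk.reverse heq
    rw [Walk.reverse_concat, Walk.reverse_concat] at this
    have hs := congrArg Walk.support this
    rw [Walk.support_cons, Walk.support_cons] at hs
    have hs' := List.tail_eq_of_cons_eq hs
    have h1' := (P ⟨w, hwJ⟩).reverse.support_eq_cons
    have h2'' := (P ⟨x, hxJ⟩).reverse.support_eq_cons
    rw [h1', h2''] at hs'
    exact List.head_eq_of_cons_eq hs'
  refine ⟨j.1, j.2, x, Finset.mem_erase.mpr ⟨hx.ne', hxJ⟩, hx, huniq, ?_⟩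
  -- erase connectivity
  intro a ha b' hb'
  have haJ := Finset.mem_of_mem_erase ha
  have hb'J := Finset.mem_of_mem_erase hb'
  have haj : a ≠ j.1 := (Finset.mem_erase.mp ha).1
  have hb'j : b' ≠ j.1 := (Finset.mem_erase.mp hb').1
  obtain ⟨w0, hw0⟩ := hconn a haJ b' hb'J
  set W := w0.bypass with hW
  have hWpath : W.IsPath := w0.bypass_isPath
  have hWsupp : ∀ y ∈ W.support, y ∈ J := fun y hy => hw0 y (w0.support_bypass_subset hy)
  suffices hjnot : (j : I) ∉ W.support by
    exact ⟨W, fun y hy => Finset.mem_erase.mpr ⟨fun he => hjnot (he ▸ hy), hWsupp y hy⟩⟩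
  intro hyj
  -- derive contradiction : y = j.1 is interior with two distinct neighbors both = x
  set A := W.takeUntil j.1 hyj with hA
  set B := W.dropUntil j.1 hyj with hB
  have hApath : A.IsPath := hWpath.takeUntil hyj
  have hBpath : B.IsPath := hWpath.dropUntil hyj
  -- penultimate of A
  have hArev : A.reverse.IsPath := (Walk.isPath_reverse_iff A).mpr hApath
  obtain ⟨u1, hu1, A', hA'⟩ := Walk.exists_eq_cons_of_ne (fun h => haj h.symm : (j:I) ≠ a) A.reverse
  have hu1J : u1 ∈ J := by
    have : u1 ∈ A.reverse.support := by rw [hA']; simp [Walk.support_cons]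
    rw [Walk.support_reverse, List.mem_reverse] at this
    exact hWsupp u1 (W.support_takeUntil_subset hyj this)
  have hu1x : u1 = x := huniq u1 hu1J hu1
  -- second vertex of B
  obtain ⟨u2, hu2, B', hB'⟩ := Walk.exists_eq_cons_of_ne (fun h => hb'j h.symm : (j:I) ≠ b') B
  have hu2J : u2 ∈ J := by
    have : u2 ∈ B.support := by rw [hB']; simp [Walk.support_cons]
    exact hWsupp u2 (W.support_dropUntil_subset hyj this)
  have hu2x : u2 = x := huniq u2 hu2J hu2
  -- x appears both in A.support and in tail of B.support : contradicts nodup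
  have hxA : x ∈ A.support := by
    rw [← hu1x]
    have : u1 ∈ A.reverse.support := by rw [hA']; simp [Walk.support_cons]
    rwa [Walk.support_reverse, List.mem_reverse] at this
  have hxB : x ∈ B.support.tail := by
    rw [← hu2x, hB', Walk.support_cons]
    simp
  have hnodup : (A.support ++ B.support.tail).Nodup := by
    have := hWpath.support_nodup
    rw [← W.take_spec hyj, Walk.support_append] at this
    exact this
  rw [List.nodup_append] at hnodup
  exact hnodup.2.2 x hxA x hxB rfl

variable {I : Type} {T : SimpleGraph I}

lemma walk_of_induce_connected {s : Set I} (hs : (T.induce s).Connected) {a b : I}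
    (ha : a ∈ s) (hb : b ∈ s) : ∃ w : T.Walk a b, ∀ x ∈ w.support, x ∈ s := by
  obtain ⟨w⟩ := hs ⟨a, ha⟩ ⟨b, hb⟩
  refine ⟨w.map (SimpleGraph.Embedding.induce s).toHom, fun x hx => ?_⟩
  erw [Walk.support_map, List.mem_map] at hx
  obtain ⟨⟨y, hy⟩, _, rfl⟩ := hx
  exact hy

lemma exists_covering_subtree {V : Type} [Fintype V] (G : SimpleGraph V)
    (hT : T.IsTree) (bag : I → Finset V)
    (hcover : ∀ v, ∃ i, v ∈ bag i)
    (hedge : ∀ u v, G.Adj u v → ∃ i, u ∈ bag i ∧ v ∈ bag i) :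
    ∃ J : Finset I, J.Nonempty ∧
      (∀ a ∈ J, ∀ b ∈ J, ∃ w : T.Walk a b, ∀ x ∈ w.support, x ∈ J) ∧
      (∀ v, ∃ j ∈ J, v ∈ bag j) ∧
      (∀ u v, G.Adj u v → ∃ j ∈ J, u ∈ bag j ∧ v ∈ bag j) := by
  classical
  have hIne : Nonempty I := hT.isConnected.nonempty
  set i₀ : I := Classical.arbitrary I with hi₀
  choose iv hiv using hcover
  set F : V × V → I := fun q =>
    if h : G.Adj q.1 q.2 then Classical.choose (hedge q.1 q.2 h) else i₀ with hF
  set J₀ : Finset I := (Finset.univ.image iv) ∪ (Finset.univ.image F) ∪ {i₀} with hJ₀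
  have hw : ∀ j : I, ∃ w : T.Walk i₀ j, True := by
    intro j
    obtain ⟨w⟩ := hT.isConnected.preconnected i₀ j
    exact ⟨w, trivial⟩
  choose w _ using hw
  set J : Finset I := J₀.biUnion (fun j => (w j).support.toFinset) with hJ
  have hsubJ : ∀ j ∈ J₀, ∀ x ∈ (w j).support, x ∈ J := by
    intro j hj x hx
    rw [hJ, Finset.mem_biUnion]
    exact ⟨j, hj, List.mem_toFinset.mpr hx⟩
  have hJ₀J : ∀ j ∈ J₀, j ∈ J := fun j hj => hsubJ j hj j (Walk.end_mem_support _)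
  refine ⟨J, ⟨i₀, hJ₀J i₀ (by simp [hJ₀])⟩, ?_, ?_, ?_⟩
  · intro a ha b hb
    rw [hJ, Finset.mem_biUnion] at ha hb
    obtain ⟨ja, hja, ha⟩ := ha
    obtain ⟨jb, hjb, hb⟩ := hb
    rw [List.mem_toFinset] at ha hb
    refine ⟨((w ja).takeUntil a ha).reverse.append ((w jb).takeUntil b hb), fun x hx => ?_⟩
    rw [Walk.mem_support_append_iff] at hx
    rcases hx with hx | hx
    · rw [Walk.support_reverse, List.mem_reverse] at hx
      exact hsubJ ja hja x ((w ja).support_takeUntil_subset ha hx)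
    · exact hsubJ jb hjb x ((w jb).support_takeUntil_subset hb hx)
  · intro v
    exact ⟨iv v, hJ₀J _ (by simp [hJ₀]), hiv v⟩
  · intro u v huv
    refine ⟨F (u, v), hJ₀J _ (by simp [hJ₀]), ?_⟩
    have : F (u, v) = Classical.choose (hedge u v huv) := by simp [hF, huv]
    rw [this]
    exact Classical.choose_spec (hedge u v huv)

lemma glue_lemma {V I : Type} [Fintype V] {T : SimpleGraph I} (hT : T.IsTree)
    (bag : I → Finset V) (k : ℕ)
    (hbagcard : ∀ i, (bag i).card ≤ k + 1)
    (hvconn : ∀ v, (T.induce {i : I | v ∈ bag i}).Connected)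
    (X : Matrix V V ℝ) (hX : X.PosSemidef) :
    ∀ (n : ℕ) (J : Finset I), J.card = n → J.Nonempty →
      (∀ a ∈ J, ∀ b ∈ J, ∃ w : T.Walk a b, ∀ x ∈ w.support, x ∈ J) →
      ∃ g : V → EuclideanSpace ℝ (Fin (k + 1)),
        ∀ j ∈ J, ∀ u ∈ bag j, ∀ v ∈ bag j, ⟪g u, g v⟫ = X u v := by
  classical
  intro n
  induction n using Nat.strong_induction_on with
  | _ n IH =>
    intro J hcardJ hne hconn
    rcases le_or_gt n 1 with h1 | h1
    · -- base case : J is a singleton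
      obtain ⟨j, rfl⟩ : ∃ j, J = {j} := by
        rcases Finset.card_eq_one.mp (le_antisymm (hcardJ ▸ h1) (Finset.card_pos.mpr hne)) with ⟨j, hj⟩
        exact ⟨j, hj⟩
      have hsub : (X.submatrix (fun a : {x // x ∈ bag j} => (a : V))
          (fun a : {x // x ∈ bag j} => (a : V))).PosSemidef := hX.submatrix _
      obtain ⟨f, hf⟩ := exists_gram_rep _ hsub (by
        simpa [Fintype.card_coe] using hbagcard j)
      refine ⟨fun v => if h : v ∈ bag j then f ⟨v, h⟩ else 0, ?_⟩
      intro j' hj' u hu v hv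
      rw [Finset.mem_singleton] at hj'
      subst hj'
      simp only [dif_pos hu, dif_pos hv]
      exact hf ⟨u, hu⟩ ⟨v, hv⟩
    · -- inductive step
      obtain ⟨j, hjJ, p, hpJ', hadj, huniq, hconn'⟩ :=
        tree_exists_leaf hT J hconn (by omega)
      have hpJ : p ∈ J := Finset.mem_of_mem_erase hpJ'
      have hpj : p ≠ j := (Finset.mem_erase.mp hpJ').1
      have hne' : (J.erase j).Nonempty := ⟨p, hpJ'⟩
      have hcard' : (J.erase j).card = n - 1 := by
        rw [Finset.card_erase_of_mem hjJ, hcardJ]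
      obtain ⟨g, hg⟩ := IH (n - 1) (by omega) (J.erase j) hcard' hne' hconn'
      -- separation : vertices of bag j seen elsewhere in J are in bag p
      have hsep : ∀ v ∈ bag j, ∀ j' ∈ J.erase j, v ∈ bag j' → v ∈ bag p := by
        intro v hv j' hj' hv'
        have hj'J : j' ∈ J := Finset.mem_of_mem_erase hj'
        have hjj' : j ≠ j' := fun h => (Finset.mem_erase.mp hj').1 h.symm
        obtain ⟨w1, hw1⟩ := walk_of_induce_connected (hvconn v)
          (show j ∈ {i : I | v ∈ bag i} from hv) (show j' ∈ {i : I | v ∈ bag i} from hv')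
        obtain ⟨w2, hw2⟩ := hconn j hjJ j' hj'J
        have hP1 : w1.bypass.IsPath := w1.bypass_isPath
        have hP2 : w2.bypass.IsPath := w2.bypass_isPath
        have heq : w1.bypass = w2.bypass := tree_path_unique hT _ _ hP1 hP2
        obtain ⟨x, hx, Q', hQ'⟩ := SimpleGraph.Walk.exists_eq_cons_of_ne hjj' w1.bypass
        have hxsupp : x ∈ w1.bypass.support := by
          rw [hQ', Walk.support_cons]
          exact List.mem_cons_of_mem _ Q'.start_mem_support
        have hxJ : x ∈ J := by
          have : x ∈ w2.bypass.support := heq ▸ hxsupp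
          exact hw2 x (w2.support_bypass_subset this)
        have hxp : x = p := huniq x hxJ hx
        have : v ∈ bag x := hw1 x (w1.support_bypass_subset hxsupp)
        rwa [hxp] at this
      -- Gram representation of bag j
      have hsub : (X.submatrix (fun a : {x // x ∈ bag j} => (a : V))
          (fun a : {x // x ∈ bag j} => (a : V))).PosSemidef := hX.submatrix _
      obtain ⟨f, hf⟩ := exists_gram_rep _ hsub (by
        simpa [Fintype.card_coe] using hbagcard j)
      -- match f and g on bag j ∩ bag p
      set α := {v : V // v ∈ bag j ∩ bag p} with hα
      set f1 : α → EuclideanSpace ℝ (Fin (k + 1)) :=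
        fun a => f ⟨a.1, (Finset.mem_inter.mp a.2).1⟩ with hf1
      set f2 : α → EuclideanSpace ℝ (Fin (k + 1)) := fun a => g a.1 with hf2
      obtain ⟨O, hO⟩ := exists_isometry_of_gram_eq f1 f2 (by
        intro a b
        rw [hf1, hf2]
        simp only
        rw [hf]
        simp only [Matrix.submatrix_apply]
        exact (hg p hpJ' a.1 (Finset.mem_inter.mp a.2).2 b.1 (Finset.mem_inter.mp b.2).2).symm)
      refine ⟨fun v => if h : v ∈ bag j then
          (if v ∈ bag p then g v else O (f ⟨v, h⟩)) else g v, ?_⟩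
      have claimA : ∀ v (hv : v ∈ bag j),
          (if h : v ∈ bag j then (if v ∈ bag p then g v else O (f ⟨v, h⟩)) else g v)
            = O (f ⟨v, hv⟩) := by
        intro v hv
        rw [dif_pos hv]
        by_cases hvp : v ∈ bag p
        · rw [if_pos hvp]
          have := hO ⟨v, Finset.mem_inter.mpr ⟨hv, hvp⟩⟩
          rw [hf1, hf2] at this
          simp only at this
          exact this.symm
        · rw [if_neg hvp]
      have claimB : ∀ j' ∈ J.erase j, ∀ v ∈ bag j',
          (if h : v ∈ bag j then (if v ∈ bag p then g v else O (f ⟨v, h⟩)) else g v) = g v := by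
        intro j' hj' v hv
        by_cases hvj : v ∈ bag j
        · have hvp : v ∈ bag p := hsep v hvj j' hj' hv
          rw [dif_pos hvj, if_pos hvp]
        · rw [dif_neg hvj]
      intro j' hj' u hu v hv
      beta_reduce
      by_cases hjj' : j' = j
      · subst hjj'
        rw [claimA u hu, claimA v hv, LinearIsometry.inner_map_map]
        have := hf ⟨u, hu⟩ ⟨v, hv⟩
        simpa using this
      · have hj'e : j' ∈ J.erase j := Finset.mem_erase.mpr ⟨hjj', hj'⟩
        rw [claimB j' hj'e u hu, claimB j' hj'e v hv]
        exact hg j' hj'e u hu v hv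

/-- If `G` is a partial `k`-tree (equivalently, a graph of treewidth at most `k`, i.e.,
it admits a tree decomposition with all bags of size at most `k + 1`), then
`gd(G) ≤ k + 1`. -/
theorem gd_le_of_treewidth_le {V : Type} [Fintype V] (G : SimpleGraph V) (k : ℕ)
    (h : ∃ (I : Type) (T : SimpleGraph I) (bag : I → Finset V),
      T.IsTree ∧
      (∀ i, (bag i).card ≤ k + 1) ∧
      (∀ v, ∃ i, v ∈ bag i) ∧
      (∀ u v, G.Adj u v → ∃ i, u ∈ bag i ∧ v ∈ bag i) ∧
      (∀ v, (T.induce {i : I | v ∈ bag i}).Connected)) :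
    gd G ≤ k + 1 := by
  classical
  obtain ⟨I, T, bag, hT, hbagcard, hcover, hedge, hvconn⟩ := h
  have hmem : (k + 1) ∈ {k' : ℕ | 1 ≤ k' ∧ ∀ X : Matrix V V ℝ, X.PosSemidef →
      ∃ Y : Matrix V V ℝ, Y.PosSemidef ∧ Y.rank ≤ k' ∧
        (∀ i, Y i i = X i i) ∧ (∀ i j, G.Adj i j → Y i j = X i j)} := by
    refine ⟨by omega, fun X hX => ?_⟩
    obtain ⟨J, hne, hconn, hcov, hedgecov⟩ := exists_covering_subtree G hT bag hcover hedge
    obtain ⟨g, hg⟩ := glue_lemma hT bag k hbagcard hvconn X hX J.card J rfl hne hconn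
    obtain ⟨Y, hY1, hY2, hY3⟩ := gram_matrix_psd_rank g
    refine ⟨Y, hY1, hY2, fun i => ?_, fun i j hij => ?_⟩
    · obtain ⟨j, hjJ, hib⟩ := hcov i
      rw [hY3]
      exact hg j hjJ i hib i hib
    · obtain ⟨j', hj'J, hib, hjb⟩ := hedgecov i j hij
      rw [hY3]
      exact hg j' hj'J i hib j hjb
  exact Nat.sInf_le hmem
end

section
/- For every n ≥ 2 and every edge e of the complete graph K_n, the graph K_n \ e obtained by deleting the edge e satisfies gd(K_n \ e) = n − 1. -/
open Matrix Finset

/-- Lower bound: any PSD matrix agreeing with the identity on the diagonal and off the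
deleted edge has rank at least `n - 1`. -/
lemma lower_rank (n : ℕ) (i j : Fin n) (hij : i ≠ j)
    (Y : Matrix (Fin n) (Fin n) ℝ) (hY : Y.PosSemidef)
    (hdiag : ∀ k, Y k k = (1 : Matrix (Fin n) (Fin n) ℝ) k k)
    (hedge : ∀ k l, k ≠ l → s(k, l) ≠ s(i, j) → Y k l = (1 : Matrix (Fin n) (Fin n) ℝ) k l) :
    n - 1 ≤ Y.rank := by
  set t : ℝ := Y i j with ht
  have hY0 : ∀ k l, k ≠ l → ¬(k = i ∧ l = j) → ¬(k = j ∧ l = i) → Y k l = 0 := by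
    intro k l hkl h1 h2
    rw [hedge k l hkl (fun h => by rw [Sym2.eq_iff] at h; tauto), Matrix.one_apply_ne hkl]
  have hdiag' : ∀ k, Y k k = 1 := by
    intro k; rw [hdiag k, Matrix.one_apply_eq]
  have hji : Y j i = t := by
    show Y j i = Y i j
    have := hY.isHermitian.apply i j
    rw [← this]; simp
  -- kernel is contained in a line
  set v : Fin n → ℝ := (Pi.single j 1 : Fin n → ℝ) - t • (Pi.single i 1 : Fin n → ℝ) with hv
  have hvj : v j = 1 := by
    simp [hv, Pi.single_apply, hij.symm]
  have hvne : v ≠ 0 := by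
    intro h
    have := congrFun h j
    rw [hvj] at this
    simp at this
  have hker : LinearMap.ker Y.mulVecLin ≤ Submodule.span ℝ {v} := by
    intro x hx
    rw [LinearMap.mem_ker, Matrix.mulVecLin_apply] at hx
    have hxk : ∀ k, k ≠ i → k ≠ j → x k = 0 := by
      intro k hki hkj
      have h0 : (Y *ᵥ x) k = 0 := congrFun hx k
      rw [Matrix.mulVec, dotProduct] at h0
      rw [Fintype.sum_eq_single k (fun l hl => ?_)] at h0
      · rw [hdiag' k, one_mul] at h0; exact h0
      · rw [hY0 k l (Ne.symm hl) (fun h => hki h.1) (fun h => hkj h.1), zero_mul]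
    have hxi : x i = -(t * x j) := by
      have h0 : (Y *ᵥ x) i = 0 := congrFun hx i
      rw [Matrix.mulVec, dotProduct] at h0
      rw [Fintype.sum_eq_add i j hij (fun l hl => by
        rw [hY0 i l (Ne.symm hl.1) (fun h => hl.2 h.2) (fun h => hij h.1), zero_mul])] at h0
      rw [hdiag' i, one_mul] at h0
      rw [ht]; linarith
    rw [Submodule.mem_span_singleton]
    refine ⟨x j, ?_⟩
    funext k
    rcases eq_or_ne k i with rfl | hki
    · simp [hv, Pi.single_apply, hij, Ne.symm hij, hxi, mul_comm]
    · rcases eq_or_ne k j with rfl | hkj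
      · simp [hv, Pi.single_apply, hij.symm]
      · simp [hv, Pi.single_apply, Ne.symm hki, Ne.symm hkj, hxk k hki hkj]
  have hkerfin : Module.finrank ℝ (LinearMap.ker Y.mulVecLin) ≤ 1 := by
    calc Module.finrank ℝ (LinearMap.ker Y.mulVecLin)
        ≤ Module.finrank ℝ (Submodule.span ℝ {v}) := Submodule.finrank_mono hker
      _ = 1 := finrank_span_singleton hvne
  have hrn := LinearMap.finrank_range_add_finrank_ker Y.mulVecLin
  rw [Module.finrank_pi] at hrn
  have : Y.rank = Module.finrank ℝ (LinearMap.range Y.mulVecLin) := rfl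
  simp only [Fintype.card_fin] at hrn
  omega

/-- Vector construction for the upper bound: replace the component of `u j` orthogonal to
the span of the other vectors by one parallel to a fixed direction `q`. -/
lemma vec_helper (n : ℕ) (hn : 2 ≤ n) (i j : Fin n) (hij : i ≠ j)
    (u : Fin n → EuclideanSpace ℝ (Fin n))
    (q : EuclideanSpace ℝ (Fin n)) (c : ℝ)
    (W : Submodule ℝ (EuclideanSpace ℝ (Fin n)))
    (hW : W = Submodule.span ℝ (u '' ↑(({i, j}ᶜ : Finset (Fin n)))))
    (hq : q ∈ Wᗮ)
    (hnorm : (inner ℝ (c • q) (c • q) : ℝ) =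
      inner ℝ (u j - (W.orthogonalProjection (u j) : EuclideanSpace ℝ (Fin n)))
            (u j - (W.orthogonalProjection (u j) : EuclideanSpace ℝ (Fin n))))
    (hui : u i ∈ W ⊔ Submodule.span ℝ {q}) :
    ∃ w : Fin n → EuclideanSpace ℝ (Fin n),
      (∀ k, (inner ℝ (w k) (w k) : ℝ) = inner ℝ (u k) (u k)) ∧
      (∀ k l, k ≠ l → s(k, l) ≠ s(i, j) → (inner ℝ (w k) (w l) : ℝ) = inner ℝ (u k) (u l)) ∧
      Module.finrank ℝ (Submodule.span ℝ (Set.range w)) ≤ n - 1 := by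
  classical
  set p : EuclideanSpace ℝ (Fin n) := (W.orthogonalProjection (u j) : EuclideanSpace ℝ (Fin n)) with hp
  set qj : EuclideanSpace ℝ (Fin n) := u j - p with hqj
  have hpW : p ∈ W := Submodule.coe_mem _
  have hqjW : qj ∈ Wᗮ := Submodule.sub_starProjection_mem_orthogonal (K := W) (u j)
  set w : Fin n → EuclideanSpace ℝ (Fin n) := fun k => if k = j then p + c • q else u k with hw
  have hwj : w j = p + c • q := by rw [hw]; simp
  have hwk : ∀ k, k ≠ j → w k = u k := by intro k hk; rw [hw]; simp [hk]
  have huj : u j = p + qj := by rw [hqj]; abel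
  -- inner products of orthogonal pieces with W members vanish
  have hq0 : ∀ v ∈ W, (inner ℝ v q : ℝ) = 0 := fun v hv => hq v hv
  have hqj0 : ∀ v ∈ W, (inner ℝ v qj : ℝ) = 0 := fun v hv => hqjW v hv
  have hmemW : ∀ k, k ≠ i → k ≠ j → u k ∈ W := by
    intro k hki hkj
    rw [hW]
    exact Submodule.subset_span ⟨k, by simp [hki, hkj], rfl⟩
  -- diagonal at j
  have hdiagj : (inner ℝ (w j) (w j) : ℝ) = inner ℝ (u j) (u j) := by
    have h1 : (inner ℝ p (c • q) : ℝ) = 0 := by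
      rw [real_inner_smul_right, hq0 p hpW, mul_zero]
    have h2 : (inner ℝ p qj : ℝ) = 0 := hqj0 p hpW
    rw [hwj, huj, real_inner_add_add_self, real_inner_add_add_self, h1, h2, hnorm]
  -- cross terms
  have hcross : ∀ l, l ≠ i → l ≠ j → (inner ℝ (w j) (u l) : ℝ) = inner ℝ (u j) (u l) := by
    intro l hli hlj
    have hl : u l ∈ W := hmemW l hli hlj
    rw [hwj, huj, inner_add_left, inner_add_left]
    have h1 : (inner ℝ (c • q) (u l) : ℝ) = 0 := by
      rw [real_inner_smul_left, real_inner_comm, hq0 _ hl, mul_zero]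
    have h2 : (inner ℝ qj (u l) : ℝ) = 0 := by
      rw [real_inner_comm]; exact hqj0 _ hl
    rw [h1, h2]
  refine ⟨w, ?_, ?_, ?_⟩
  · intro k
    rcases eq_or_ne k j with rfl | hk
    · exact hdiagj
    · rw [hwk k hk]
  · intro k l hkl hs
    simp only [ne_eq, Sym2.eq_iff] at hs
    push_neg at hs
    rcases eq_or_ne k j with rfl | hk
    · have hli : l ≠ i := by
        intro h; subst h; exact (hs.2 rfl).elim rfl
      rw [hwk l (Ne.symm hkl)]
      exact hcross l hli (Ne.symm hkl)
    · rcases eq_or_ne l j with rfl | hl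
      · have hki : k ≠ i := by
          intro h; subst h; exact (hs.1 rfl).elim rfl
        rw [hwk k hk, real_inner_comm, hcross k hki hk, real_inner_comm]
      · rw [hwk k hk, hwk l hl]
  · -- rank bound
    have hsub : Submodule.span ℝ (Set.range w) ≤ W ⊔ Submodule.span ℝ {q} := by
      rw [Submodule.span_le]
      rintro _ ⟨k, rfl⟩
      rcases eq_or_ne k j with rfl | hk
      · rw [hwj]
        exact Submodule.add_mem _ (Submodule.mem_sup_left hpW)
          (Submodule.mem_sup_right (Submodule.smul_mem _ _ (Submodule.mem_span_singleton_self q)))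
      · rw [hwk k hk]
        rcases eq_or_ne k i with rfl | hki
        · exact hui
        · exact Submodule.mem_sup_left (hmemW k hki hk)
    have hWfin : Module.finrank ℝ W ≤ n - 2 := by
      have h1 : Module.finrank ℝ (Submodule.span ℝ
          (Set.range fun k : (({i, j}ᶜ : Finset (Fin n)) : Set (Fin n)) => u k)) ≤
          Fintype.card (({i, j}ᶜ : Finset (Fin n)) : Set (Fin n)) :=
        finrank_range_le_card _
      rw [hW, Set.image_eq_range]
      refine h1.trans ?_
      have hcard : Fintype.card (({i, j}ᶜ : Finset (Fin n)) : Set (Fin n)) =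
          ({i, j}ᶜ : Finset (Fin n)).card := Fintype.card_coe _
      rw [hcard, Finset.card_compl]
      have h2 : ({i, j} : Finset (Fin n)).card = 2 := by
        rw [Finset.card_insert_of_notMem (by simp [hij]), Finset.card_singleton]
      simp [h2]
    have hqfin : Module.finrank ℝ (Submodule.span ℝ ({q} : Set (EuclideanSpace ℝ (Fin n)))) ≤ 1 := by
      rcases eq_or_ne q 0 with rfl | hq0
      · rw [Submodule.span_zero_singleton, finrank_bot]
        omega
      · rw [finrank_span_singleton hq0]
    calc Module.finrank ℝ (Submodule.span ℝ (Set.range w))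
        ≤ Module.finrank ℝ (W ⊔ Submodule.span ℝ {q} : Submodule ℝ _) := Submodule.finrank_mono hsub
      _ ≤ Module.finrank ℝ W + Module.finrank ℝ (Submodule.span ℝ ({q} : Set (EuclideanSpace ℝ (Fin n)))) :=
          Submodule.finrank_add_le_finrank_add_finrank _ _
      _ ≤ (n - 2) + 1 := add_le_add hWfin hqfin
      _ ≤ n - 1 := by omega

/-- The vector construction applies to every collection of vectors. -/
lemma vec_all (n : ℕ) (hn : 2 ≤ n) (i j : Fin n) (hij : i ≠ j)
    (u : Fin n → EuclideanSpace ℝ (Fin n)) :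
    ∃ w : Fin n → EuclideanSpace ℝ (Fin n),
      (∀ k, (inner ℝ (w k) (w k) : ℝ) = inner ℝ (u k) (u k)) ∧
      (∀ k l, k ≠ l → s(k, l) ≠ s(i, j) → (inner ℝ (w k) (w l) : ℝ) = inner ℝ (u k) (u l)) ∧
      Module.finrank ℝ (Submodule.span ℝ (Set.range w)) ≤ n - 1 := by
  set W : Submodule ℝ (EuclideanSpace ℝ (Fin n)) :=
    Submodule.span ℝ (u '' ↑(({i, j}ᶜ : Finset (Fin n)))) with hW
  set qi : EuclideanSpace ℝ (Fin n) :=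
    u i - (W.orthogonalProjection (u i) : EuclideanSpace ℝ (Fin n)) with hqi
  set qj : EuclideanSpace ℝ (Fin n) :=
    u j - (W.orthogonalProjection (u j) : EuclideanSpace ℝ (Fin n)) with hqj
  have hui' : u i = ↑(W.orthogonalProjection (u i)) + qi := by rw [hqi]; abel
  rcases eq_or_ne qi 0 with h0 | h0
  · refine vec_helper n hn i j hij u qj 1 W rfl
      (Submodule.sub_starProjection_mem_orthogonal (K := W) (u j)) (by rw [one_smul]) ?_
    have : u i ∈ W := by
      rw [hui', h0, add_zero]; exact Submodule.coe_mem _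
    exact Submodule.mem_sup_left this
  · refine vec_helper n hn i j hij u qi (‖qj‖ / ‖qi‖) W rfl
      (Submodule.sub_starProjection_mem_orthogonal (K := W) (u i)) ?_ ?_
    · rw [real_inner_smul_left, real_inner_smul_right, real_inner_self_eq_norm_sq,
        real_inner_self_eq_norm_sq]
      have hne : ‖qi‖ ≠ 0 := norm_ne_zero_iff.mpr h0
      field_simp
      ring
    · rw [hui']
      exact Submodule.add_mem _ (Submodule.mem_sup_left (Submodule.coe_mem _))
        (Submodule.mem_sup_right (Submodule.mem_span_singleton_self qi))

/-- Upper bound: every PSD matrix admits a PSD matrix of rank at most `n - 1` agreeing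
with it on the diagonal and off the deleted edge. -/
lemma upper_exists (n : ℕ) (hn : 2 ≤ n) (i j : Fin n) (hij : i ≠ j)
    (X : Matrix (Fin n) (Fin n) ℝ) (hX : X.PosSemidef) :
    ∃ Y : Matrix (Fin n) (Fin n) ℝ, Y.PosSemidef ∧ Y.rank ≤ n - 1 ∧
      (∀ k, Y k k = X k k) ∧ (∀ k l, k ≠ l → s(k, l) ≠ s(i, j) → Y k l = X k l) := by
  obtain ⟨B, rfl⟩ : ∃ B : Matrix (Fin n) (Fin n) ℝ, X = Bᴴ * B := by
    open scoped MatrixOrder in exact CStarAlgebra.nonneg_iff_eq_star_mul_self.mp hX.nonneg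
  set u : Fin n → EuclideanSpace ℝ (Fin n) :=
    fun k => (WithLp.equiv 2 (Fin n → ℝ)).symm (fun m => B m k) with hu
  have hXu : ∀ k l, (Bᴴ * B) k l = (inner ℝ (u k) (u l) : ℝ) := by
    intro k l
    simp [Matrix.mul_apply, PiLp.inner_apply, RCLike.inner_apply, hu, Matrix.conjTranspose_apply, mul_comm]
  obtain ⟨w, hwd, hwe, hwr⟩ := vec_all n hn i j hij u
  set C : Matrix (Fin n) (Fin n) ℝ := Matrix.of (fun m k => w k m) with hC
  have hYw : ∀ k l, (Cᴴ * C) k l = (inner ℝ (w k) (w l) : ℝ) := by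
    intro k l
    simp [hC, Matrix.mul_apply, PiLp.inner_apply, RCLike.inner_apply, Matrix.conjTranspose_apply, mul_comm]
  refine ⟨Cᴴ * C, posSemidef_conjTranspose_mul_self C, ?_, ?_, ?_⟩
  · rw [Matrix.rank_conjTranspose_mul_self, Matrix.rank_eq_finrank_span_cols]
    set e := WithLp.linearEquiv 2 ℝ (Fin n → ℝ) with he
    have h1 : Set.range C.col = ⇑e '' Set.range w := by
      rw [← Set.range_comp]
      rfl
    rw [h1, Submodule.span_image_linearEquiv]
    exact le_trans (le_of_eq (LinearEquiv.finrank_map_eq e _)) hwr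
  · intro k; rw [hYw, hwd, hXu]
  · intro k l hkl hs; rw [hYw, hwe k l hkl hs, hXu]

/-- For every `n ≥ 2` and every edge `e` of the complete graph `K_n`, the graph `K_n \\ e`
obtained by deleting the edge `e` satisfies `gd(K_n \\ e) = n − 1`. -/
theorem gd_completeGraph_deleteEdge (n : ℕ) (hn : 2 ≤ n) (i j : Fin n) (hij : i ≠ j) :
    gd ((⊤ : SimpleGraph (Fin n)).deleteEdges {s(i, j)}) = n - 1 := by
  have hadj : ∀ k l : Fin n, ((⊤ : SimpleGraph (Fin n)).deleteEdges {s(i, j)}).Adj k l ↔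
      (k ≠ l ∧ s(k, l) ≠ s(i, j)) := by
    intro k l
    simp only [SimpleGraph.deleteEdges_adj, SimpleGraph.top_adj, Set.mem_singleton_iff]
  have hmem : (n - 1) ∈ {k : ℕ | 1 ≤ k ∧ ∀ X : Matrix (Fin n) (Fin n) ℝ, X.PosSemidef →
      ∃ Y : Matrix (Fin n) (Fin n) ℝ, Y.PosSemidef ∧ Y.rank ≤ k ∧
        (∀ a, Y a a = X a a) ∧
        (∀ a b, ((⊤ : SimpleGraph (Fin n)).deleteEdges {s(i, j)}).Adj a b → Y a b = X a b)} := by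
    refine ⟨by omega, fun X hX => ?_⟩
    obtain ⟨Y, h1, h2, h3, h4⟩ := upper_exists n hn i j hij X hX
    exact ⟨Y, h1, h2, h3, fun a b hab =>
      h4 a b ((hadj a b).mp hab).1 ((hadj a b).mp hab).2⟩
  unfold gd
  apply le_antisymm
  · exact Nat.sInf_le hmem
  · apply le_csInf ⟨_, hmem⟩
    rintro b ⟨hb1, hb⟩
    by_contra hlt
    obtain ⟨Y, hY, hrank, hdiag, hedge⟩ := hb 1 Matrix.PosSemidef.one
    have hge := lower_rank n i j hij Y hY hdiag
      (fun k l h1 h2 => hedge k l ((hadj k l).mpr ⟨h1, h2⟩))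
    omega
end

section
/- For all integers 1 ≤ n ≤ m, the complete bipartite graph K_{n,m} satisfies gd(K_{n,m}) = n + 1. -/
open Matrix Finset

namespace GdAux

open scoped RealInnerProductSpace

variable {V : Type} [Fintype V] [DecidableEq V]

/-- The Gram matrix of a family of vectors. -/
noncomputable def gram {E : Type*} [NormedAddCommGroup E] [InnerProductSpace ℝ E]
    (y : V → E) : Matrix V V ℝ := Matrix.of fun v w => ⟪y v, y w⟫

lemma gram_exists_factor {E : Type*} [NormedAddCommGroup E] [InnerProductSpace ℝ E]
    [FiniteDimensional ℝ E] (y : V → E) :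
    ∃ M : Matrix (Fin (Module.finrank ℝ E)) V ℝ, gram y = Mᴴ * M := by
  classical
  let b := stdOrthonormalBasis ℝ E
  refine ⟨Matrix.of fun i v => b.repr (y v) i, ?_⟩
  ext v w
  have h : ⟪y v, y w⟫ = ⟪b.repr (y v), b.repr (y w)⟫ := (b.repr.inner_map_map _ _).symm
  simp only [gram, Matrix.of_apply, h, PiLp.inner_apply, RCLike.inner_apply, conj_trivial,
    Matrix.mul_apply, Matrix.conjTranspose_apply, star_trivial]
  exact Finset.sum_congr rfl fun _ _ => mul_comm _ _

lemma gram_posSemidef {E : Type*} [NormedAddCommGroup E] [InnerProductSpace ℝ E]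
    [FiniteDimensional ℝ E] (y : V → E) : (gram y).PosSemidef := by
  obtain ⟨M, hM⟩ := gram_exists_factor y
  rw [hM]
  exact Matrix.posSemidef_conjTranspose_mul_self M

lemma gram_rank_le {E : Type*} [NormedAddCommGroup E] [InnerProductSpace ℝ E]
    [FiniteDimensional ℝ E] (y : V → E) : (gram y).rank ≤ Module.finrank ℝ E := by
  obtain ⟨M, hM⟩ := gram_exists_factor y
  rw [hM, Matrix.rank_conjTranspose_mul_self]
  simpa using M.rank_le_card_height

lemma exists_gram {X : Matrix V V ℝ} (hX : X.PosSemidef) :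
    ∃ x : V → EuclideanSpace ℝ V, ∀ v w, X v w = ⟪x v, x w⟫ := by
  obtain ⟨B, hB⟩ : ∃ B : Matrix V V ℝ, X = Bᴴ * B := by
    open scoped MatrixOrder in exact CStarAlgebra.nonneg_iff_eq_star_mul_self.mp hX.nonneg
  refine ⟨fun v => (WithLp.toLp 2 (fun u => B u v) : EuclideanSpace ℝ V), fun v w => ?_⟩
  rw [hB]
  simp only [Matrix.mul_apply, Matrix.conjTranspose_apply, star_trivial,
    PiLp.inner_apply, RCLike.inner_apply, conj_trivial, WithLp.ofLp_toLp]
  exact Finset.sum_congr rfl fun _ _ => mul_comm _ _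

lemma mulVec_eq_zero {Y : Matrix V V ℝ} (hY : Y.PosSemidef) {z : V → ℝ}
    (hz : z ⬝ᵥ (Y *ᵥ z) = 0) : Y *ᵥ z = 0 := by
  obtain ⟨B, rfl⟩ : ∃ B : Matrix V V ℝ, Y = Bᴴ * B := by
    open scoped MatrixOrder in exact CStarAlgebra.nonneg_iff_eq_star_mul_self.mp hY.nonneg
  have hBt : Bᴴ = Bᵀ := by
    ext i j; simp [Matrix.conjTranspose_apply]
  have hBz : B *ᵥ z = 0 := by
    rw [← dotProduct_self_eq_zero (v := B *ᵥ z)]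
    rw [← Matrix.mulVec_mulVec, Matrix.dotProduct_mulVec, hBt, Matrix.vecMul_transpose] at hz
    exact hz
  rw [← Matrix.mulVec_mulVec, hBz, Matrix.mulVec_zero]

lemma col_eq {Y : Matrix V V ℝ} (hY : Y.PosSemidef) {a b : V}
    (ha : Y a a = 1) (hb : Y b b = 1) (hab : Y a b = 1) (w : V) : Y w a = Y w b := by
  have hba : Y b a = 1 := by
    have h := congrFun (congrFun hY.1 b) a
    simp only [Matrix.conjTranspose_apply, star_trivial, hab] at h
    exact h.symm
  have hmul : ∀ u, (Y *ᵥ (Pi.single a 1 - Pi.single b 1)) u = Y u a - Y u b := by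
    intro u
    simp [Matrix.mulVec_sub, Matrix.mulVec_single]
  have hYz : Y *ᵥ (Pi.single a 1 - Pi.single b 1) = 0 := by
    apply mulVec_eq_zero hY
    have hd : ∀ f : V → ℝ, (Pi.single a 1 - Pi.single b 1) ⬝ᵥ f = f a - f b := by
      intro f
      simp [sub_dotProduct, single_dotProduct]
    rw [hd, hmul a, hmul b, ha, hb, hab, hba]
    ring
  have h := congrFun hYz w
  rw [hmul w] at h
  simp only [Pi.zero_apply] at h
  linarith

lemma upper (n m : ℕ) (X : Matrix (Fin n ⊕ Fin m) (Fin n ⊕ Fin m) ℝ) (hX : X.PosSemidef) :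
    ∃ Y : Matrix (Fin n ⊕ Fin m) (Fin n ⊕ Fin m) ℝ, Y.PosSemidef ∧ Y.rank ≤ n + 1 ∧
      (∀ i, Y i i = X i i) ∧
      (∀ i j, (completeBipartiteGraph (Fin n) (Fin m)).Adj i j → Y i j = X i j) := by
  classical
  obtain ⟨x, hx⟩ := exists_gram hX
  set W : Submodule ℝ (EuclideanSpace ℝ (Fin n ⊕ Fin m)) :=
    Submodule.span ℝ (Set.range fun i : Fin n => x (Sum.inl i)) with hW
  have hmemW : ∀ i : Fin n, x (Sum.inl i) ∈ W := fun i => Submodule.subset_span ⟨i, rfl⟩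
  let P := Submodule.orthogonalProjection W
  have horth : ∀ (w z : EuclideanSpace ℝ (Fin n ⊕ Fin m)), w ∈ W →
      ⟪w, z - (P z : EuclideanSpace ℝ (Fin n ⊕ Fin m))⟫ = 0 := by
    intro w z hw
    have hmem := Submodule.sub_starProjection_mem_orthogonal (K := W) z
    exact (Submodule.mem_orthogonal W _).mp hmem w hw
  have pyth : ∀ z : EuclideanSpace ℝ (Fin n ⊕ Fin m),
      ‖(P z : EuclideanSpace ℝ (Fin n ⊕ Fin m))‖ ^ 2 + ‖z - P z‖ ^ 2 = ‖z‖ ^ 2 := by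
    intro z
    have h0 : ⟪(P z : EuclideanSpace ℝ (Fin n ⊕ Fin m)), z - P z⟫ = 0 :=
      horth _ z (P z).2
    have h := norm_add_sq_real ((P z : EuclideanSpace ℝ (Fin n ⊕ Fin m))) (z - P z)
    rw [h0] at h
    have hz : (P z : EuclideanSpace ℝ (Fin n ⊕ Fin m)) + (z - P z) = z := by abel
    rw [hz] at h
    linarith
  let e := (WithLp.equiv 2 ((↥W) × ℝ)).symm
  let y : (Fin n ⊕ Fin m) → WithLp 2 ((↥W) × ℝ) :=
    Sum.elim (fun i => e ((⟨x (Sum.inl i), hmemW i⟩ : W), (0 : ℝ)))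
      (fun j => e (P (x (Sum.inr j)),
        ‖x (Sum.inr j) - (P (x (Sum.inr j)) : EuclideanSpace ℝ (Fin n ⊕ Fin m))‖))
  have hinner : ∀ v w, ⟪y v, y w⟫ =
      ⟪((y v).fst : EuclideanSpace ℝ (Fin n ⊕ Fin m)), ((y w).fst : EuclideanSpace ℝ (Fin n ⊕ Fin m))⟫
        + (y v).snd * (y w).snd := by
    intro v w
    rw [WithLp.prod_inner_apply]
    simp [Submodule.coe_inner, RCLike.inner_apply]
    exact mul_comm _ _
  have hyfl : ∀ i, ((y (Sum.inl i)).fst : EuclideanSpace ℝ (Fin n ⊕ Fin m)) = x (Sum.inl i) :=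
    fun _ => rfl
  have hysl : ∀ i, (y (Sum.inl i)).snd = (0 : ℝ) := fun _ => rfl
  have hyfr : ∀ j, ((y (Sum.inr j)).fst : EuclideanSpace ℝ (Fin n ⊕ Fin m)) =
      (P (x (Sum.inr j)) : EuclideanSpace ℝ (Fin n ⊕ Fin m)) := fun _ => rfl
  have hysr : ∀ j, (y (Sum.inr j)).snd =
      ‖x (Sum.inr j) - (P (x (Sum.inr j)) : EuclideanSpace ℝ (Fin n ⊕ Fin m))‖ := fun _ => rfl
  refine ⟨gram y, gram_posSemidef y, ?_, ?_, ?_⟩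
  · refine (gram_rank_le y).trans ?_
    have h1 : Module.finrank ℝ (WithLp 2 ((↥W) × ℝ)) = Module.finrank ℝ ((↥W) × ℝ) :=
      (WithLp.linearEquiv 2 ℝ ((↥W) × ℝ)).finrank_eq
    have h2 : Module.finrank ℝ ((↥W) × ℝ) = Module.finrank ℝ (↥W) + 1 := by
      rw [Module.finrank_prod, Module.finrank_self]
    have h3 : Module.finrank ℝ (↥W) ≤ n := by
      refine (finrank_span_le_card _).trans ?_
      rw [Set.toFinset_range]
      exact Finset.card_image_le.trans (by simp)
    omega
  · rintro (i | j)
    · have h : ⟪y (Sum.inl i), y (Sum.inl i)⟫ = ⟪x (Sum.inl i), x (Sum.inl i)⟫ := by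
        rw [hinner, hyfl, hysl]
        ring
      simp only [gram, Matrix.of_apply, h, hx]
    · have h : ⟪y (Sum.inr j), y (Sum.inr j)⟫ = ⟪x (Sum.inr j), x (Sum.inr j)⟫ := by
        rw [hinner, hyfr, hysr]
        rw [real_inner_self_eq_norm_sq, real_inner_self_eq_norm_sq]
        have := pyth (x (Sum.inr j))
        nlinarith [this]
      simp only [gram, Matrix.of_apply, h, hx]
  · rintro (i | j) (i' | j') hadj
    · simp [completeBipartiteGraph] at hadj
    · have hkey : ⟪x (Sum.inl i),
          (P (x (Sum.inr j')) : EuclideanSpace ℝ (Fin n ⊕ Fin m))⟫ =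
          ⟪x (Sum.inl i), x (Sum.inr j')⟫ := by
        have h0 := horth (x (Sum.inl i)) (x (Sum.inr j')) (hmemW i)
        rw [inner_sub_right] at h0
        linarith
      have h : ⟪y (Sum.inl i), y (Sum.inr j')⟫ = ⟪x (Sum.inl i), x (Sum.inr j')⟫ := by
        rw [hinner, hyfl, hyfr, hysl]
        rw [zero_mul, add_zero, hkey]
      simp only [gram, Matrix.of_apply, h, hx]
    · have h0 := horth (x (Sum.inl i')) (x (Sum.inr j)) (hmemW i')
      rw [inner_sub_right] at h0
      have c1 := real_inner_comm ((P (x (Sum.inr j)) : EuclideanSpace ℝ (Fin n ⊕ Fin m)))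
        (x (Sum.inl i'))
      have c2 := real_inner_comm (x (Sum.inr j)) (x (Sum.inl i'))
      have h : ⟪y (Sum.inr j), y (Sum.inl i')⟫ = ⟪x (Sum.inr j), x (Sum.inl i')⟫ := by
        rw [hinner, hyfr, hyfl, hysl]
        rw [mul_zero, add_zero]
        linarith
      simp only [gram, Matrix.of_apply, h, hx]
    · simp [completeBipartiteGraph] at hadj

lemma inner_single_single {k : ℕ} (a b : Fin k) :
    ⟪EuclideanSpace.single a (1 : ℝ), EuclideanSpace.single b (1 : ℝ)⟫ =
      if a = b then (1 : ℝ) else 0 := by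
  simp only [PiLp.inner_apply, RCLike.inner_apply, conj_trivial, EuclideanSpace.single_apply,
    mul_ite, ite_mul, one_mul, mul_one, mul_zero, zero_mul]
  by_cases h : a = b
  · subst h
    simp
  · simp only [h, if_false]
    rw [Finset.sum_eq_zero]
    intro i _
    by_cases hia : i = a <;> by_cases hib : i = b <;> simp_all

lemma lower (n m : ℕ) (h1 : 1 ≤ n) (h2 : n ≤ m) :
    ∃ X : Matrix (Fin n ⊕ Fin m) (Fin n ⊕ Fin m) ℝ, X.PosSemidef ∧
      ∀ Y : Matrix (Fin n ⊕ Fin m) (Fin n ⊕ Fin m) ℝ, Y.PosSemidef →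
        (∀ i, Y i i = X i i) →
        (∀ i j, (completeBipartiteGraph (Fin n) (Fin m)).Adj i j → Y i j = X i j) →
        n + 1 ≤ Y.rank := by
  classical
  have hn1m : n - 1 < m := by omega
  let jl : Fin m := ⟨n - 1, hn1m⟩
  let g : (Fin n ⊕ Fin m) → EuclideanSpace ℝ (Fin (n + 1)) :=
    Sum.elim (fun i => EuclideanSpace.single i.castSucc 1)
      (fun j => if h : (j : ℕ) < n - 1 then EuclideanSpace.single ⟨(j : ℕ), by omega⟩ 1
        else if (j : ℕ) = n - 1 then EuclideanSpace.single (Fin.last n) 1 else 0)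
  refine ⟨gram g, gram_posSemidef g, ?_⟩
  intro Y hY hdiag hedge
  have hadj : ∀ (i : Fin n) (j : Fin m),
      (completeBipartiteGraph (Fin n) (Fin m)).Adj (Sum.inl i) (Sum.inr j) := by
    intro i j
    simp [completeBipartiteGraph]
  have hsymm : ∀ a b, Y a b = Y b a := by
    intro a b
    have h := congrFun (congrFun hY.1 a) b
    simpa [Matrix.conjTranspose_apply] using h.symm
  -- values of the Gram matrix
  have hXll : ∀ i i' : Fin n, gram g (Sum.inl i) (Sum.inl i') = if i = i' then 1 else 0 := by
    intro i i'
    simp only [gram, Matrix.of_apply, g, Sum.elim_inl]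
    rw [inner_single_single]
    simp [Fin.castSucc_inj]
  have hXlr1 : ∀ (i : Fin n) (j : Fin m), (j : ℕ) < n - 1 →
      gram g (Sum.inl i) (Sum.inr j) = if (i : ℕ) = (j : ℕ) then 1 else 0 := by
    intro i j hj
    simp only [gram, Matrix.of_apply, g, Sum.elim_inl, Sum.elim_inr, dif_pos hj]
    rw [inner_single_single]
    congr 1
    simp [Fin.ext_iff, Fin.castSucc]
  have hXlr2 : ∀ i : Fin n, gram g (Sum.inl i) (Sum.inr jl) = 0 := by
    intro i
    have h1' : ¬ ((jl : ℕ) < n - 1) := by simp [jl]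
    have h2' : (jl : ℕ) = n - 1 := rfl
    simp only [gram, Matrix.of_apply, g, Sum.elim_inl, Sum.elim_inr, dif_neg h1', if_pos h2']
    rw [inner_single_single]
    have : i.castSucc ≠ Fin.last n := by
      simp [Fin.ext_iff, Fin.castSucc]
      omega
    simp [this]
  have hXrr1 : ∀ j : Fin m, (j : ℕ) < n - 1 → gram g (Sum.inr j) (Sum.inr j) = 1 := by
    intro j hj
    simp only [gram, Matrix.of_apply, g, Sum.elim_inr, dif_pos hj]
    rw [inner_single_single]
    simp
  have hXrr2 : gram g (Sum.inr jl) (Sum.inr jl) = 1 := by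
    have h1' : ¬ ((jl : ℕ) < n - 1) := by simp [jl]
    have h2' : (jl : ℕ) = n - 1 := rfl
    simp only [gram, Matrix.of_apply, g, Sum.elim_inr, dif_neg h1', if_pos h2']
    rw [inner_single_single]
    simp
  -- columns tied by Cauchy-Schwarz
  have hcol : ∀ j : Fin m, (hj : (j : ℕ) < n - 1) →
      ∀ w, Y w (Sum.inl (⟨(j : ℕ), by omega⟩ : Fin n)) = Y w (Sum.inr j) := by
    intro j hj
    refine col_eq hY ?_ ?_ ?_
    · rw [hdiag, hXll]
      simp
    · rw [hdiag, hXrr1 j hj]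
    · rw [hedge _ _ (hadj _ _), hXlr1 _ _ hj]
      simp
  -- diagonal entries are 1
  have hdll : ∀ i : Fin n, Y (Sum.inl i) (Sum.inl i) = 1 := by
    intro i
    rw [hdiag, hXll]
    simp
  -- off-diagonal left-left entries are 0
  have hollt : ∀ i i' : Fin n, (i' : ℕ) < n - 1 → i ≠ i' → Y (Sum.inl i) (Sum.inl i') = 0 := by
    intro i i' hi' hne
    have hj : ((⟨(i' : ℕ), hn1m.trans_le' (by omega)⟩ : Fin m) : ℕ) < n - 1 := hi'
    have := hcol ⟨(i' : ℕ), by omega⟩ hj (Sum.inl i)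
    simp only [Fin.eta] at this
    rw [this, hedge _ _ (hadj _ _), hXlr1 _ _ hj]
    have : (i : ℕ) ≠ (i' : ℕ) := fun h => hne (Fin.ext h)
    simp [this]
  have holl : ∀ i i' : Fin n, i ≠ i' → Y (Sum.inl i) (Sum.inl i') = 0 := by
    intro i i' hne
    by_cases hi' : (i' : ℕ) < n - 1
    · exact hollt i i' hi' hne
    · have hi'n : (i' : ℕ) = n - 1 := by omega
      have hi : (i : ℕ) < n - 1 := by
        have : (i : ℕ) ≠ (i' : ℕ) := fun h => hne (Fin.ext h)
        omega
      rw [hsymm]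
      exact hollt i' i hi hne.symm
  -- entries with the last column
  have hollast : ∀ i : Fin n, Y (Sum.inl i) (Sum.inr jl) = 0 := by
    intro i
    rw [hedge _ _ (hadj _ _)]
    exact hXlr2 i
  have hdlast : Y (Sum.inr jl) (Sum.inr jl) = 1 := by
    rw [hdiag]
    exact hXrr2
  -- the selection function
  let f : Fin (n + 1) → Fin n ⊕ Fin m :=
    fun k => if h : (k : ℕ) < n then Sum.inl ⟨(k : ℕ), h⟩ else Sum.inr jl
  have hsub : ∀ k l, Y (f k) (f l) = if k = l then 1 else 0 := by
    intro k l
    by_cases hk : (k : ℕ) < n <;> by_cases hl : (l : ℕ) < n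
    · simp only [f, dif_pos hk, dif_pos hl]
      by_cases hkl : k = l
      · subst hkl
        simp [hdll]
      · have hne : (⟨(k : ℕ), hk⟩ : Fin n) ≠ ⟨(l : ℕ), hl⟩ := by
          simp only [ne_eq, Fin.mk.injEq]
          exact fun h => hkl (Fin.ext h)
        rw [holl _ _ hne]
        simp [hkl]
    · have hln : (l : ℕ) = n := by omega
      have hne : k ≠ l := by
        intro h
        subst h
        omega
      simp only [f, dif_pos hk, dif_neg hl]
      rw [hollast]
      simp [hne]
    · have hne : k ≠ l := by
        intro h
        subst h
        omega
      simp only [f, dif_neg hk, dif_pos hl]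
      rw [hsymm, hollast]
      simp [hne]
    · have hkl : k = l := by
        apply Fin.ext
        omega
      subst hkl
      simp only [f, dif_neg hk]
      simp [hdlast]
  -- columns of Y at the selected indices are linearly independent
  let c : Fin (n + 1) → (Fin n ⊕ Fin m → ℝ) := fun l => fun w => Y w (f l)
  have hli : LinearIndependent ℝ c := by
    rw [Fintype.linearIndependent_iff]
    intro gc hg k
    have h := congrFun hg (f k)
    simp only [Finset.sum_apply, Pi.smul_apply, smul_eq_mul, Pi.zero_apply, c] at h
    have h2' : ∀ l ∈ Finset.univ, gc l * Y (f k) (f l) = if k = l then gc l else 0 := by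
      intro l _
      rw [hsub k l]
      by_cases hkl : k = l <;> simp [hkl]
    rw [Finset.sum_congr rfl h2'] at h
    simpa using h
  have hmem : ∀ l, c l ∈ LinearMap.range Y.mulVecLin := by
    intro l
    refine ⟨Pi.single (f l) 1, ?_⟩
    ext w
    simp [Matrix.mulVecLin_apply, Matrix.mulVec_single, c]
  let c' : Fin (n + 1) → LinearMap.range Y.mulVecLin := fun l => ⟨c l, hmem l⟩
  have hli' : LinearIndependent ℝ c' := by
    apply LinearIndependent.of_comp (LinearMap.range Y.mulVecLin).subtype
    exact hli
  have hcard := hli'.fintype_card_le_finrank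
  simpa [Matrix.rank] using hcard

end GdAux

/-- For all integers `1 ≤ n ≤ m`, the complete bipartite graph `K_{n,m}` satisfies
`gd(K_{n,m}) = n + 1`. -/
theorem gd_completeBipartiteGraph (n m : ℕ) (h1 : 1 ≤ n) (h2 : n ≤ m) :
    gd (completeBipartiteGraph (Fin n) (Fin m)) = n + 1 := by
  unfold gd
  have hmem : (n + 1) ∈ {k : ℕ | 1 ≤ k ∧
      ∀ X : Matrix (Fin n ⊕ Fin m) (Fin n ⊕ Fin m) ℝ, X.PosSemidef →
      ∃ Y : Matrix (Fin n ⊕ Fin m) (Fin n ⊕ Fin m) ℝ, Y.PosSemidef ∧ Y.rank ≤ n + 1 ∧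
        (∀ i, Y i i = X i i) ∧
        (∀ i j, (completeBipartiteGraph (Fin n) (Fin m)).Adj i j → Y i j = X i j)} :=
    ⟨by omega, fun X hX => GdAux.upper n m X hX⟩
  apply le_antisymm
  · exact Nat.sInf_le hmem
  · refine le_csInf ⟨_, hmem⟩ ?_
    rintro b ⟨hb1, hb⟩
    by_contra hlt
    push_neg at hlt
    obtain ⟨X, hX, hkey⟩ := GdAux.lower n m h1 h2
    obtain ⟨Y, hYp, hrank, hdiag, hedge⟩ := hb X hX
    have := hkey Y hYp hdiag hedge
    omega
end

section
/- Let e_1, …, e_5 be the standard unit vectors of R^5 and let X ∈ S^6_+ be the Gram matrix of the vectors e_1, e_2, e_3, e_4, e_5, (e_1 + e_2)/√2, labeling the vertices 1, …, 6 respectively. Then X is the unique positive semidefinite 6×6 matrix that agrees with X on all diagonal entries and on all entries indexed by edges of K_{2,2,2}; in particular, every positive semidefinite completion of this partial K_{2,2,2}-matrix has rank 5. -/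
open Matrix Finset

/-- The complete tripartite graph `K_{2,2,2}`: `K_6` minus the perfect matching
`(1,4), (2,5), (3,6)` (here on vertices `0, …, 5`, minus `(0,3), (1,4), (2,5)`). -/
def K222 : SimpleGraph (Fin 6) :=
  (⊤ : SimpleGraph (Fin 6)).deleteEdges {s(0, 3), s(1, 4), s(2, 5)}

/-- The vectors `e₁, e₂, e₃, e₄, e₅, (e₁ + e₂)/√2` of `ℝ⁵`, labeling the six vertices
of `K_{2,2,2}`. -/
noncomputable def gramVecs : Fin 6 → (Fin 5 → ℝ) :=
  ![Pi.single 0 1, Pi.single 1 1, Pi.single 2 1, Pi.single 3 1, Pi.single 4 1,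
    (Real.sqrt 2)⁻¹ • (Pi.single 0 1 + Pi.single 1 1)]

/-- The Gram matrix `X` of the vectors `e₁, e₂, e₃, e₄, e₅, (e₁ + e₂)/√2`. -/
noncomputable def gramX : Matrix (Fin 6) (Fin 6) ℝ :=
  Matrix.of fun i j => ∑ t, gramVecs i t * gramVecs j t

set_option linter.unnecessarySeqFocus false

@[simp] lemma cons_val_five' {α} {m : ℕ} (x : α) (u : Fin (m+5) → α) :
    Matrix.vecCons x u 5 =
      Matrix.vecHead (Matrix.vecTail (Matrix.vecTail (Matrix.vecTail (Matrix.vecTail u)))) :=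
  rfl

noncomputable def sq2 : ℝ := (Real.sqrt 2)⁻¹

lemma gramX_eq : gramX = !![1,0,0,0,0,sq2; 0,1,0,0,0,sq2; 0,0,1,0,0,0;
    0,0,0,1,0,0; 0,0,0,0,1,0; sq2,sq2,0,0,0,1] := by
  have h2 : (Real.sqrt 2)⁻¹ * (Real.sqrt 2)⁻¹ = 2⁻¹ := by
    rw [← mul_inv, Real.mul_self_sqrt (by norm_num)]
  ext i j
  fin_cases i <;> fin_cases j <;>
    simp [gramX, gramVecs, Fin.sum_univ_five, Pi.single_apply, sq2, h2] <;>
    norm_num [Matrix.vecHead, Matrix.vecTail]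

noncomputable def gramB : Matrix (Fin 5) (Fin 6) ℝ :=
  Matrix.of fun t i => gramVecs i t

lemma gramX_eq_mul : gramX = gramBᴴ * gramB := by
  ext i j
  simp [gramX, gramB, Matrix.mul_apply, Matrix.conjTranspose_apply]

lemma gramX_posSemidef : gramX.PosSemidef := by
  rw [gramX_eq_mul]; exact Matrix.posSemidef_conjTranspose_mul_self _

def gramC : Matrix (Fin 6) (Fin 5) ℝ :=
  Matrix.of fun i t => if (i : ℕ) = (t : ℕ) then 1 else 0

lemma gramB_mul_C : gramB * gramC = 1 := by
  ext t s
  fin_cases t <;> fin_cases s <;>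
    simp [gramB, gramC, gramVecs, Matrix.mul_apply, Fin.sum_univ_six, Pi.single_apply,
      Matrix.one_apply, show ((2:Fin 6):ℕ)=2 from rfl, show ((3:Fin 6):ℕ)=3 from rfl,
      show ((4:Fin 6):ℕ)=4 from rfl, show ((5:Fin 6):ℕ)=5 from rfl, show ((2:Fin 5):ℕ)=2 from rfl, show ((3:Fin 5):ℕ)=3 from rfl, show ((4:Fin 5):ℕ)=4 from rfl] <;>
    norm_num [Matrix.vecHead, Matrix.vecTail]

lemma gramX_rank : gramX.rank = 5 := by
  have hC : (5 : ℕ) ≤ gramB.rank := by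
    have := Matrix.rank_mul_le_left gramB gramC
    rwa [gramB_mul_C, Matrix.rank_one, Fintype.card_fin] at this
  have hB : gramB.rank = 5 :=
    le_antisymm (gramB.rank_le_card_height.trans (Fintype.card_fin 5).le) hC
  calc gramX.rank = (gramBᵀ * gramB).rank := by
        rw [gramX_eq_mul, Matrix.conjTranspose_eq_transpose_of_trivial]
    _ = gramB.rank := Matrix.rank_transpose_mul_self _
    _ = 5 := hB

lemma adj_of (i j : Fin 6) (h : i ≠ j) (ha : s(i,j) ≠ s((0:Fin 6),(3:Fin 6)))
    (hb : s(i,j) ≠ s((1:Fin 6),(4:Fin 6))) (hc : s(i,j) ≠ s((2:Fin 6),(5:Fin 6))) :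
    K222.Adj i j := by
  simp only [K222, SimpleGraph.deleteEdges_adj, SimpleGraph.top_adj, Set.mem_insert_iff,
    Set.mem_singleton_iff]
  tauto


/-- The Gram matrix `X` of `e₁, e₂, e₃, e₄, e₅, (e₁ + e₂)/√2` is positive semidefinite and
is the unique positive semidefinite `6 × 6` matrix agreeing with `X` on all diagonal
entries and on all entries indexed by edges of `K_{2,2,2}`; in particular every positive
semidefinite completion of this partial `K_{2,2,2}`-matrix has rank `5`. -/
theorem gramX_unique_psd_completion :
    gramX.PosSemidef ∧
    (∀ X' : Matrix (Fin 6) (Fin 6) ℝ, X'.PosSemidef →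
      (∀ i, X' i i = gramX i i) → (∀ i j, K222.Adj i j → X' i j = gramX i j) →
      X' = gramX ∧ X'.rank = 5) := by
  refine ⟨gramX_posSemidef, fun X' hX' h1 h2 => ?_⟩
  have hsq : Real.sqrt 2 ≠ 0 := by positivity
  have hsym : ∀ i j, X' i j = X' j i := by
    intro i j
    conv_lhs => rw [← hX'.1]
    simp [Matrix.conjTranspose_apply]
  -- known entries
  have g : ∀ i j : Fin 6, gramX i j =
      !![1,0,0,0,0,sq2; 0,1,0,0,0,sq2; 0,0,1,0,0,0;
        0,0,0,1,0,0; 0,0,0,0,1,0; sq2,sq2,0,0,0,1] i j := fun i j => by rw [gramX_eq]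
  have e00 : X' 0 0 = 1 := by rw [h1 0, g]; norm_num
  have e11 : X' 1 1 = 1 := by rw [h1 1, g]; norm_num
  have e55 : X' 5 5 = 1 := by rw [h1 5, g]; simp
  have e01 : X' 0 1 = 0 := by
    rw [h2 0 1 (adj_of _ _ (by decide) (by decide) (by decide) (by decide)), g]; norm_num
  have e05 : X' 0 5 = sq2 := by
    rw [h2 0 5 (adj_of _ _ (by decide) (by decide) (by decide) (by decide)), g]
    simp
  have e15 : X' 1 5 = sq2 := by
    rw [h2 1 5 (adj_of _ _ (by decide) (by decide) (by decide) (by decide)), g]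
    simp
  have e20 : X' 2 0 = 0 := by
    rw [h2 2 0 (adj_of _ _ (by decide) (by decide) (by decide) (by decide)), g]; simp
  have e21 : X' 2 1 = 0 := by
    rw [h2 2 1 (adj_of _ _ (by decide) (by decide) (by decide) (by decide)), g]; simp
  have e31 : X' 3 1 = 0 := by
    rw [h2 3 1 (adj_of _ _ (by decide) (by decide) (by decide) (by decide)), g]; simp
  have e35 : X' 3 5 = 0 := by
    rw [h2 3 5 (adj_of _ _ (by decide) (by decide) (by decide) (by decide)), g]
    simp
  have e40 : X' 4 0 = 0 := by
    rw [h2 4 0 (adj_of _ _ (by decide) (by decide) (by decide) (by decide)), g]; simp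
  have e45 : X' 4 5 = 0 := by
    rw [h2 4 5 (adj_of _ _ (by decide) (by decide) (by decide) (by decide)), g]
    simp
  -- kernel vector
  set v : Fin 6 → ℝ := ![1, 1, 0, 0, 0, -Real.sqrt 2] with hv
  have hq : star v ⬝ᵥ X' *ᵥ v = 0 := by
    simp only [star_trivial, dotProduct, Matrix.mulVec, Fin.sum_univ_six, hv]
    simp only [Matrix.cons_val_zero, Matrix.cons_val_one, Matrix.head_cons]
    simp only [Matrix.cons_val]
    norm_num [Matrix.vecHead, Matrix.vecTail, e00, e11, e55, e01, e05, e15,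
      hsym 1 0, hsym 5 0, hsym 5 1, e01, sq2]
    field_simp
    norm_num
  have hker : X' *ᵥ v = 0 := (hX'.dotProduct_mulVec_zero_iff v).1 hq
  have hk : ∀ i : Fin 6, X' i 0 + X' i 1 - Real.sqrt 2 * X' i 5 = 0 := by
    intro i
    have := congrFun hker i
    simp only [Matrix.mulVec, dotProduct, Fin.sum_univ_six, hv, Pi.zero_apply] at this
    simp only [Matrix.cons_val] at this
    norm_num [Matrix.vecHead, Matrix.vecTail] at this
    linarith [this]
  have e25 : X' 2 5 = 0 := by
    have := hk 2
    rw [e20, e21] at this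
    have h25 : Real.sqrt 2 * X' 2 5 = 0 := by linarith
    rcases mul_eq_zero.1 h25 with h | h
    · exact absurd h hsq
    · exact h
  have e30 : X' 3 0 = 0 := by
    have := hk 3
    rw [e31, e35] at this
    linarith
  have e41 : X' 4 1 = 0 := by
    have := hk 4
    rw [e40, e45] at this
    linarith
  have heq : X' = gramX := by
    ext i j
    fin_cases i <;> fin_cases j <;>
      first
        | exact h1 _
        | (rw [g]; norm_num [Matrix.vecHead, Matrix.vecTail]
           first
             | exact e25
             | exact e30
             | exact e41
             | exact (hsym _ _).trans e25
             | exact (hsym _ _).trans e30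
             | exact (hsym _ _).trans e41)
        | exact h2 _ _ (adj_of _ _ (by decide) (by decide) (by decide) (by decide))
  exact ⟨heq, heq ▸ gramX_rank⟩
end

section
/- For every graph G, gd(G) ≥ ed(G) + 1. -/
set_option maxHeartbeats 1000000

open Matrix Finset

/-- `d` has a Euclidean (distance) representation in `ℝ^k` for the graph `G`:
vectors `p i` with `‖p i − p j‖² = d i j` for all edges. -/
def HasEucRep {V : Type} [Fintype V] (G : SimpleGraph V) (d : V → V → ℝ) (k : ℕ) : Prop :=
  ∃ p : V → (Fin k → ℝ),
    ∀ i j, G.Adj i j → ∑ t, (p i t - p j t) ^ 2 = d i j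

/-- `ed(G, d)`: the smallest `k` such that `d` has a Euclidean representation in `ℝ^k`. -/
noncomputable def edOf {V : Type} [Fintype V] (G : SimpleGraph V) (d : V → V → ℝ) : ℕ :=
  sInf {k : ℕ | HasEucRep G d k}

/-- `ed(G)`: the maximum of `ed(G, d)` over all `d ∈ EDM(G)`. -/
noncomputable def edSup {V : Type} [Fintype V] (G : SimpleGraph V) : ℕ :=
  sSup {m : ℕ | ∃ d : V → V → ℝ, (∃ k, HasEucRep G d k) ∧ edOf G d = m}

section Auxiliary

open scoped RealInnerProductSpace

lemma gram_decomp {V : Type} [Fintype V] [DecidableEq V] {Y : Matrix V V ℝ}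
    (hY : Y.PosSemidef) {k : ℕ} (hrank : Y.rank ≤ k) :
    ∃ q : V → EuclideanSpace ℝ (Fin k), ∀ i j, Y i j = ⟪q i, q j⟫ := by
  classical
  have hH : Y.IsHermitian := hY.isHermitian
  set lam := hH.eigenvalues with hlam
  set U : Matrix V V ℝ := (hH.eigenvectorUnitary : Matrix V V ℝ) with hU
  have hcard : Fintype.card {t // lam t ≠ 0} ≤ Fintype.card (Fin k) := by
    rw [Fintype.card_fin, ← hH.rank_eq_card_non_zero_eigs]; exact hrank
  obtain ⟨f⟩ := Function.Embedding.nonempty_iff_card_le.2 hcard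
  set q : V → EuclideanSpace ℝ (Fin k) := fun i =>
    WithLp.toLp 2 (fun s => ∑ t : {t // lam t ≠ 0}, if f t = s then Real.sqrt (lam t) * U i t.1 else 0)
  refine ⟨q, fun i j => ?_⟩
  have hentry : Y i j = ∑ t, U i t * lam t * U j t := by
    conv_lhs => rw [hH.spectral_theorem, Unitary.conjStarAlgAut_apply]
    rw [Matrix.mul_apply]
    congr 1; ext t
    rw [Matrix.mul_diagonal]
    simp [hU, hlam, mul_comm, mul_assoc, mul_left_comm]
  rw [hentry]
  have hinner : ⟪q i, q j⟫ = ∑ s, q i s * q j s := by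
    simp [PiLp.inner_apply, RCLike.inner_apply, q]
    exact Finset.sum_congr rfl fun _ _ => mul_comm _ _
  rw [hinner]
  symm
  have step1 : ∀ s, q i s * q j s =
      ∑ t : {t // lam t ≠ 0}, (if f t = s then Real.sqrt (lam t) * U i t.1 * q j s else 0) := by
    intro s
    rw [show q i s = ∑ t : {t // lam t ≠ 0}, if f t = s then Real.sqrt (lam t) * U i t.1 else 0 from rfl,
      Finset.sum_mul]
    congr 1; ext t; split <;> simp
  calc ∑ s, q i s * q j s
      = ∑ s, ∑ t : {t // lam t ≠ 0}, (if f t = s then Real.sqrt (lam t) * U i t.1 * q j s else 0) := by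
        exact Finset.sum_congr rfl fun s _ => step1 s
    _ = ∑ t : {t // lam t ≠ 0}, ∑ s, (if f t = s then Real.sqrt (lam t) * U i t.1 * q j s else 0) :=
        Finset.sum_comm
    _ = ∑ t : {t // lam t ≠ 0}, Real.sqrt (lam t) * U i t.1 * q j (f t) := by
        refine Finset.sum_congr rfl fun t _ => ?_
        rw [Finset.sum_ite_eq (Finset.univ) (f t)]
        simp
    _ = ∑ t : {t // lam t ≠ 0}, lam t.1 * (U i t.1 * U j t.1) := by
        refine Finset.sum_congr rfl fun t _ => ?_
        have : q j (f t) = Real.sqrt (lam t) * U j t.1 := by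
          rw [show q j (f t) = ∑ t' : {t' // lam t' ≠ 0}, if f t' = f t then Real.sqrt (lam t') * U j t'.1 else 0 from rfl]
          rw [Finset.sum_eq_single t]
          · simp
          · intro t' _ hne
            simp [f.injective.eq_iff, hne]
          · simp
        rw [this]
        have hnn : 0 ≤ lam t.1 := hY.eigenvalues_nonneg t.1
        rw [show Real.sqrt (lam t) * U i t.1 * (Real.sqrt (lam t) * U j t.1)
            = (Real.sqrt (lam t) * Real.sqrt (lam t)) * (U i t.1 * U j t.1) by ring,
          Real.mul_self_sqrt hnn]
    _ = ∑ t, lam t * (U i t * U j t) := by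
        rw [← Finset.sum_filter_of_ne (p := fun t => lam t ≠ 0) (by intro t _ h hl; exact absurd (by rw [hl, zero_mul]) h)]
        rw [Finset.sum_subtype (p := fun t => lam t ≠ 0) (Finset.univ.filter (fun t => lam t ≠ 0)) (by intro t; simp) (fun t => lam t * (U i t * U j t))]
    _ = ∑ t, U i t * lam t * U j t := by
        refine Finset.sum_congr rfl fun t _ => ?_; ring


variable {V : Type} [Fintype V]

lemma key_lemma (G : SimpleGraph V) (d : V → V → ℝ) {k r : ℕ} (hk : 1 ≤ k)
    (hP : ∀ X : Matrix V V ℝ, X.PosSemidef →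
      ∃ Y : Matrix V V ℝ, Y.PosSemidef ∧ Y.rank ≤ k ∧
        (∀ i, Y i i = X i i) ∧ (∀ i j, G.Adj i j → Y i j = X i j))
    (p : V → Fin r → ℝ)
    (hp : ∀ i j, G.Adj i j → ∑ t, (p i t - p j t) ^ 2 = d i j) :
    HasEucRep G d (k - 1) := by
  classical
  -- Step 1: for each m, a Gram-type configuration q m in ℝ^k
  have H : ∀ m : ℕ, ∃ q : V → EuclideanSpace ℝ (Fin k),
      (∀ i, ⟪q i, q i⟫ = (∑ s, p i s ^ 2) + ((m:ℝ)+1) ^ 2) ∧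
      (∀ i j, G.Adj i j → ⟪q i, q j⟫ = (∑ s, p i s * p j s) + ((m:ℝ)+1) ^ 2) := by
    intro m
    set c : ℝ := (m:ℝ)+1 with hc
    set B : Matrix (Sum (Fin r) Unit) V ℝ := fun t i => Sum.elim (fun s => p i s) (fun _ => c) t
      with hB
    have hpsd : (Bᴴ * B).PosSemidef := Matrix.posSemidef_conjTranspose_mul_self B
    have hBent : ∀ i j, (Bᴴ * B) i j = (∑ s, p i s * p j s) + c ^ 2 := by
      intro i j
      rw [Matrix.mul_apply]
      rw [Fintype.sum_sum_type]
      simp [hB, sq, Matrix.conjTranspose_apply]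
      rfl
    obtain ⟨Y, hY, hrank, hdiag, hedge⟩ := hP _ hpsd
    obtain ⟨q, hq⟩ := gram_decomp hY hrank
    refine ⟨q, fun i => ?_, fun i j hij => ?_⟩
    · rw [← hq i i, hdiag i, hBent i i]
      congr 1
      exact Finset.sum_congr rfl fun s _ => (sq (p i s)).symm ▸ rfl
    · rw [← hq i j, hedge i j hij, hBent i j]
  choose q hqd hqe using H
  -- basic facts about q
  have hnormsq : ∀ m v, ‖q m v‖ ^ 2 = (∑ s, p v s ^ 2) + ((m:ℝ)+1) ^ 2 := by
    intro m v
    rw [← real_inner_self_eq_norm_sq]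
    exact hqd m v
  have hpnn : ∀ v, (0:ℝ) ≤ ∑ s, p v s ^ 2 :=
    fun v => Finset.sum_nonneg fun s _ => sq_nonneg _
  have hnormge : ∀ (m : ℕ) (v : V), (m:ℝ)+1 ≤ ‖q m v‖ := by
    intro m v
    nlinarith [hnormsq m v, hpnn v, norm_nonneg (q m v), Nat.cast_nonneg (α := ℝ) m]
  have hqne : ∀ m v, q m v ≠ 0 := by
    intro m v h
    have := hnormge m v
    rw [h, norm_zero] at this
    have : (0:ℝ) ≤ (m:ℝ) := Nat.cast_nonneg m
    linarith
  have hedgesq : ∀ m i j, G.Adj i j → ‖q m i - q m j‖ ^ 2 = d i j := by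
    intro m i j hij
    have h1 := hnormsq m i
    have h2 := hnormsq m j
    have h3 := hqe m i j hij
    have h4 : ‖q m i - q m j‖ ^ 2
        = ‖q m i‖ ^ 2 - 2 * ⟪q m i, q m j⟫ + ‖q m j‖ ^ 2 := norm_sub_sq_real _ _
    have h5 : ∑ t, (p i t - p j t) ^ 2
        = (∑ s, p i s ^ 2) - 2 * (∑ s, p i s * p j s) + (∑ s, p j s ^ 2) := by
      rw [Finset.mul_sum, ← Finset.sum_sub_distrib, ← Finset.sum_add_distrib]
      exact Finset.sum_congr rfl fun t _ => by ring
    rw [← hp i j hij, h5, h4, h1, h2, h3]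
    ring
  -- Step 2: connected component representatives and walk bounds
  set rep : V → V := fun i => (G.connectedComponentMk i).out with hrepdef
  have hreach : ∀ i, G.Reachable i (rep i) := by
    intro i
    exact (SimpleGraph.ConnectedComponent.exact ((G.connectedComponentMk i).out_eq)).symm
  have hrepadj : ∀ i j, G.Adj i j → rep j = rep i := by
    intro i j hij
    exact congrArg Quot.out
      (SimpleGraph.ConnectedComponent.connectedComponentMk_eq_of_adj hij.symm)
  set C0 : ℝ := ∑ a : V, ∑ b : V, Real.sqrt (d a b) with hC0
  have hC0nn : 0 ≤ C0 :=
    Finset.sum_nonneg fun a _ => Finset.sum_nonneg fun b _ => Real.sqrt_nonneg _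
  have hedgenorm : ∀ m a b, G.Adj a b → ‖q m a - q m b‖ = Real.sqrt (d a b) := by
    intro m a b hab
    rw [← hedgesq m a b hab, Real.sqrt_sq (norm_nonneg _)]
  have hedgeC0 : ∀ a b : V, Real.sqrt (d a b) ≤ C0 := by
    intro a b
    calc Real.sqrt (d a b) ≤ ∑ b' : V, Real.sqrt (d a b') :=
          Finset.single_le_sum (fun b' _ => Real.sqrt_nonneg _) (Finset.mem_univ b)
      _ ≤ C0 := Finset.single_le_sum
          (f := fun a' => ∑ b' : V, Real.sqrt (d a' b'))
          (fun a' _ => Finset.sum_nonneg fun b' _ => Real.sqrt_nonneg _) (Finset.mem_univ a)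
  have walkb : ∀ m, ∀ {a b : V}, ∀ W : G.Walk a b, ‖q m a - q m b‖ ≤ (W.length : ℝ) * C0 := by
    intro m a b W
    induction W with
    | nil => simp
    | @cons u v w huv W ih =>
        calc ‖q m u - q m w‖ ≤ ‖q m u - q m v‖ + ‖q m v - q m w‖ := by
              have := norm_sub_le_norm_sub_add_norm_sub (q m u) (q m v) (q m w)
              exact this
          _ ≤ C0 + (W.length : ℝ) * C0 := by
              have h1 : ‖q m u - q m v‖ ≤ C0 := by
                rw [hedgenorm m u v huv]; exact hedgeC0 u v
              linarith
          _ = ((W.cons huv).length : ℝ) * C0 := by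
              rw [SimpleGraph.Walk.length_cons]
              push_cast
              ring
  set Wk : ∀ i : V, G.Walk i (rep i) := fun i => (hreach i).some with hWk
  set C : V → ℝ := fun i => ((Wk i).length : ℝ) * C0 with hC
  have hCnn : ∀ i, 0 ≤ C i := fun i => mul_nonneg (Nat.cast_nonneg _) hC0nn
  have hdistrep : ∀ m i, ‖q m i - q m (rep i)‖ ≤ C i := fun m i => walkb m (Wk i)
  -- Step 3: split q into tangential and radial parts
  set nq : ℕ → V → EuclideanSpace ℝ (Fin k) := fun m v => ‖q m v‖⁻¹ • q m v with hnq
  set hh : ℕ → V → ℝ := fun m i => ⟪q m i, nq m (rep i)⟫ with hhh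
  set x : ℕ → V → EuclideanSpace ℝ (Fin k) := fun m i => q m i - hh m i • nq m (rep i) with hx
  have F1 : ∀ m v, ‖nq m v‖ = 1 := by
    intro m v
    rw [hnq]
    exact norm_smul_inv_norm (hqne m v)
  have F2 : ∀ m i, ⟪x m i, nq m (rep i)⟫ = 0 := by
    intro m i
    rw [hx]
    simp only [inner_sub_left, real_inner_smul_left]
    rw [real_inner_self_eq_norm_sq, F1 m (rep i)]
    simp [hhh]
  have hqrep_eq : ∀ m i, q m (rep i) = ‖q m (rep i)‖ • nq m (rep i) := by
    intro m i
    rw [hnq]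
    rw [smul_inv_smul₀ (norm_ne_zero_iff.2 (hqne m (rep i)))]
  have F3 : ∀ m i, ‖x m i‖ ≤ C i := by
    intro m i
    have hdecomp : q m i - q m (rep i) = x m i + (hh m i - ‖q m (rep i)‖) • nq m (rep i) := by
      rw [hx]
      simp only [sub_smul]
      rw [← hqrep_eq m i]
      abel
    have hsq : ‖q m i - q m (rep i)‖ ^ 2
        = ‖x m i‖ ^ 2 + (hh m i - ‖q m (rep i)‖) ^ 2 := by
      rw [hdecomp, norm_add_sq_real, real_inner_smul_right, F2 m i, norm_smul,
        F1 m (rep i)]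
      simp [mul_pow, abs_sq]
    have h1 : ‖x m i‖ ^ 2 ≤ ‖q m i - q m (rep i)‖ ^ 2 := by
      rw [hsq]; nlinarith [sq_nonneg (hh m i - ‖q m (rep i)‖)]
    have := hdistrep m i
    nlinarith [norm_nonneg (x m i), norm_nonneg (q m i - q m (rep i)), hCnn i]
  have F4 : ∀ m i j, G.Adj i j →
      ‖x m i - x m j‖ ^ 2 + (hh m i - hh m j) ^ 2 = d i j := by
    intro m i j hij
    have hrep := hrepadj i j hij
    have hdecomp : q m i - q m j = (x m i - x m j) + (hh m i - hh m j) • nq m (rep i) := by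
      rw [hx]
      simp only [sub_smul, hrep]
      abel
    have hinner0 : ⟪x m i - x m j, nq m (rep i)⟫ = 0 := by
      rw [inner_sub_left, F2 m i]
      have := F2 m j
      rw [hrep] at this
      rw [this]; ring
    have : ‖q m i - q m j‖ ^ 2 = ‖x m i - x m j‖ ^ 2 + (hh m i - hh m j) ^ 2 := by
      rw [hdecomp, norm_add_sq_real, real_inner_smul_right, hinner0, norm_smul,
        F1 m (rep i)]
      simp [mul_pow, abs_sq]
    rw [← this, hedgesq m i j hij]
  set K : V → V → ℝ := fun i j =>
    (|(∑ s, p i s ^ 2) - (∑ s, p j s ^ 2)| + C i ^ 2 + C j ^ 2) / 2 with hK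
  have hKnn : ∀ i j, 0 ≤ K i j := by
    intro i j
    have := hCnn i
    have := hCnn j
    have := abs_nonneg ((∑ s, p i s ^ 2) - (∑ s, p j s ^ 2))
    rw [hK]
    positivity
  have F5 : ∀ m i j, G.Adj i j → |hh m i - hh m j| ≤ K i j / ((m:ℝ)+1) := by
    intro m i j hij
    have hrep := hrepadj i j hij
    set u := q m (rep i) with hu
    set R := ‖q m (rep i)‖ with hR
    have hRpos : (0:ℝ) < R := lt_of_lt_of_le (by positivity) (hnormge m (rep i))
    have hdiff : hh m i - hh m j = R⁻¹ * ⟪q m i - q m j, u⟫ := by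
      rw [hhh]
      simp only [hrep]
      rw [inner_sub_left]
      rw [hnq]
      simp only [real_inner_smul_right]
      ring
    have hiu : 2 * ⟪q m i, u⟫ = ‖q m i‖ ^ 2 + ‖u‖ ^ 2 - ‖q m i - u‖ ^ 2 := by
      have := norm_sub_sq_real (q m i) u
      linarith
    have hju : 2 * ⟪q m j, u⟫ = ‖q m j‖ ^ 2 + ‖u‖ ^ 2 - ‖q m j - u‖ ^ 2 := by
      have := norm_sub_sq_real (q m j) u
      linarith
    have hnum : 2 * ⟪q m i - q m j, u⟫
        = ((∑ s, p i s ^ 2) - (∑ s, p j s ^ 2)) - ‖q m i - u‖ ^ 2 + ‖q m j - u‖ ^ 2 := by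
      rw [inner_sub_left]
      have h1 := hnormsq m i
      have h2 := hnormsq m j
      linarith
    have hbi : ‖q m i - u‖ ^ 2 ≤ C i ^ 2 := by
      have := hdistrep m i
      nlinarith [norm_nonneg (q m i - u), hCnn i]
    have hbj : ‖q m j - u‖ ^ 2 ≤ C j ^ 2 := by
      have h := hdistrep m j
      rw [hrep] at h
      nlinarith [norm_nonneg (q m j - u), hCnn j]
    have habs : |⟪q m i - q m j, u⟫| ≤ K i j := by
      rw [hK]
      rw [abs_le]
      constructor
      · have := abs_le.1 (le_refl |(∑ s, p i s ^ 2) - (∑ s, p j s ^ 2)|)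
        have h3 := norm_nonneg (q m j - u)
        nlinarith [neg_abs_le ((∑ s, p i s ^ 2) - (∑ s, p j s ^ 2)), sq_nonneg ‖q m j - u‖]
      · have h3 := norm_nonneg (q m i - u)
        nlinarith [le_abs_self ((∑ s, p i s ^ 2) - (∑ s, p j s ^ 2)), sq_nonneg ‖q m i - u‖]
    have hRge : (m:ℝ)+1 ≤ R := hnormge m (rep i)
    rw [hdiff, abs_mul, abs_inv, abs_of_pos hRpos]
    calc R⁻¹ * |⟪q m i - q m j, u⟫| ≤ R⁻¹ * K i j := by
          apply mul_le_mul_of_nonneg_left habs (inv_nonneg.2 hRpos.le)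
      _ ≤ ((m:ℝ)+1)⁻¹ * K i j := by
          apply mul_le_mul_of_nonneg_right _ (hKnn i j)
          exact inv_anti₀ (by positivity) hRge
      _ = K i j / ((m:ℝ)+1) := by ring

  -- Step 4: compactness and limits
  set R0 : ℝ := 1 + ∑ v : V, C v with hR0
  have hCle : ∀ v, C v ≤ R0 := by
    intro v
    have h := Finset.single_le_sum (f := C) (fun i _ => hCnn i) (Finset.mem_univ v)
    rw [hR0]; linarith
  have hR0ge1 : (1:ℝ) ≤ R0 := by
    have : (0:ℝ) ≤ ∑ v : V, C v := Finset.sum_nonneg fun i _ => hCnn i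
    rw [hR0]; linarith
  set z : ℕ → (V → EuclideanSpace ℝ (Fin k) × EuclideanSpace ℝ (Fin k)) :=
    fun m v => (x m v, nq m v) with hzdef
  have hzmem : ∀ m, z m ∈ Metric.closedBall
      (0 : V → EuclideanSpace ℝ (Fin k) × EuclideanSpace ℝ (Fin k)) R0 := by
    intro m
    rw [Metric.mem_closedBall, dist_zero_right]
    refine (pi_norm_le_iff_of_nonneg (by linarith)).2 fun v => ?_
    refine max_le ?_ ?_
    · exact le_trans (F3 m v) (hCle v)
    · rw [F1 m v]; exact hR0ge1
  haveI : ProperSpace (V → EuclideanSpace ℝ (Fin k) × EuclideanSpace ℝ (Fin k)) :=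
    FiniteDimensional.proper ℝ _
  obtain ⟨zl, -, φ, hφ, hzt⟩ := tendsto_subseq_of_bounded Metric.isBounded_closedBall hzmem
  set X' : V → EuclideanSpace ℝ (Fin k) := fun v => (zl v).1 with hX'
  set W' : V → EuclideanSpace ℝ (Fin k) := fun v => (zl v).2 with hW'
  have hcomp : ∀ v, Filter.Tendsto (fun n => z (φ n) v) Filter.atTop (nhds (zl v)) :=
    fun v => ((continuous_apply v).tendsto zl).comp hzt
  have hxt : ∀ v, Filter.Tendsto (fun n => x (φ n) v) Filter.atTop (nhds (X' v)) :=
    fun v => (continuous_fst.tendsto (zl v)).comp (hcomp v)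
  have hwt : ∀ v, Filter.Tendsto (fun n => nq (φ n) v) Filter.atTop (nhds (W' v)) :=
    fun v => (continuous_snd.tendsto (zl v)).comp (hcomp v)
  have hWnorm : ∀ v, ‖W' v‖ = 1 := by
    intro v
    have h1 : Filter.Tendsto (fun n => ‖nq (φ n) v‖) Filter.atTop (nhds ‖W' v‖) :=
      (continuous_norm.tendsto (W' v)).comp (hwt v)
    have h2 : (fun n => ‖nq (φ n) v‖) = fun _ : ℕ => (1:ℝ) := funext fun n => F1 (φ n) v
    rw [h2] at h1
    exact tendsto_nhds_unique h1 tendsto_const_nhds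
  have hWX : ∀ i, ⟪W' (rep i), X' i⟫ = 0 := by
    intro i
    have h1 : Filter.Tendsto (fun n => ⟪nq (φ n) (rep i), x (φ n) i⟫)
        Filter.atTop (nhds ⟪W' (rep i), X' i⟫) := (hwt (rep i)).inner (hxt i)
    have h2 : (fun n => ⟪nq (φ n) (rep i), x (φ n) i⟫) = fun _ : ℕ => (0:ℝ) :=
      funext fun n => by rw [real_inner_comm]; exact F2 (φ n) i
    rw [h2] at h1
    exact tendsto_nhds_unique h1 tendsto_const_nhds
  have hXdist : ∀ i j, G.Adj i j → ‖X' i - X' j‖ ^ 2 = d i j := by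
    intro i j hij
    have hA : Filter.Tendsto (fun n => ‖x (φ n) i - x (φ n) j‖ ^ 2)
        Filter.atTop (nhds (‖X' i - X' j‖ ^ 2)) :=
      (((hxt i).sub (hxt j)).norm).pow 2
    have hg0 : Filter.Tendsto (fun n : ℕ => K i j / ((n:ℝ)+1)) Filter.atTop (nhds 0) := by
      have h1 := tendsto_one_div_add_atTop_nhds_zero_nat.const_mul (K i j)
      rw [mul_zero] at h1
      convert h1 using 2 with n
      rw [mul_one_div]
    have hg1 : Filter.Tendsto (fun n : ℕ => (K i j / ((φ n:ℝ)+1)) ^ 2)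
        Filter.atTop (nhds 0) := by
      have h2 := (hg0.comp hφ.tendsto_atTop).pow 2
      simpa using h2
    have hB : Filter.Tendsto (fun n => (hh (φ n) i - hh (φ n) j) ^ 2)
        Filter.atTop (nhds 0) := by
      refine squeeze_zero (fun n => sq_nonneg _) (fun n => ?_) hg1
      have h5 := F5 (φ n) i j hij
      calc (hh (φ n) i - hh (φ n) j) ^ 2 = |hh (φ n) i - hh (φ n) j| ^ 2 := (sq_abs _).symm
        _ ≤ (K i j / ((φ n:ℝ)+1)) ^ 2 := by
            apply pow_le_pow_left₀ (abs_nonneg _) h5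
    have hA' : Filter.Tendsto (fun n => ‖x (φ n) i - x (φ n) j‖ ^ 2)
        Filter.atTop (nhds (d i j)) := by
      have heq : (fun n => ‖x (φ n) i - x (φ n) j‖ ^ 2)
          = fun n => d i j - (hh (φ n) i - hh (φ n) j) ^ 2 := by
        funext n
        have := F4 (φ n) i j hij
        linarith
      rw [heq]
      have hc : Filter.Tendsto (fun _ : ℕ => d i j) Filter.atTop (nhds (d i j)) :=
        tendsto_const_nhds
      simpa using hc.sub hB
    exact tendsto_nhds_unique hA hA'
  -- Step 5: final construction
  haveI hfact : Fact (Module.finrank ℝ (EuclideanSpace ℝ (Fin k)) = (k-1)+1) :=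
    ⟨by rw [finrank_euclideanSpace_fin]; omega⟩
  have hWne : ∀ v, W' v ≠ 0 := by
    intro v h
    have := hWnorm v
    rw [h, norm_zero] at this
    norm_num at this
  set bb : ∀ v : V, OrthonormalBasis (Fin (k-1)) ℝ ↥((ℝ ∙ W' v)ᗮ) :=
    fun v => OrthonormalBasis.fromOrthogonalSpanSingleton (k-1) (hWne v) with hbb
  have hmem : ∀ i, X' i ∈ (ℝ ∙ W' (rep i))ᗮ :=
    fun i => Submodule.mem_orthogonal_singleton_iff_inner_right.2 (hWX i)
  set F : V → EuclideanSpace ℝ (Fin k) → EuclideanSpace ℝ (Fin (k-1)) :=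
    fun u y => (bb u).repr (Submodule.orthogonalProjection ((ℝ ∙ W' u)ᗮ) y) with hF
  have hiso : ∀ (u : V) (a c : EuclideanSpace ℝ (Fin k))
      (ha : a ∈ (ℝ ∙ W' u)ᗮ) (hc : c ∈ (ℝ ∙ W' u)ᗮ),
      ∑ t, (F u a t - F u c t) ^ 2 = ‖a - c‖ ^ 2 := by
    intro u a c ha hc
    have hpa : Submodule.orthogonalProjection ((ℝ ∙ W' u)ᗮ) a = ⟨a, ha⟩ := by
      exact Submodule.orthogonalProjection_mem_subspace_eq_self (⟨a, ha⟩ : (ℝ ∙ W' u)ᗮ)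
    have hpc : Submodule.orthogonalProjection ((ℝ ∙ W' u)ᗮ) c = ⟨c, hc⟩ := by
      exact Submodule.orthogonalProjection_mem_subspace_eq_self (⟨c, hc⟩ : (ℝ ∙ W' u)ᗮ)
    have hFa : F u a = (bb u).repr ⟨a, ha⟩ := by rw [hF]; simp only [hpa]
    have hFc : F u c = (bb u).repr ⟨c, hc⟩ := by rw [hF]; simp only [hpc]
    rw [hFa, hFc]
    set y1 := (bb u).repr ⟨a, ha⟩ with hy1
    set y2 := (bb u).repr ⟨c, hc⟩ with hy2
    have h1 : ‖y1 - y2‖ ^ 2 = ∑ t, (y1 t - y2 t) ^ 2 := by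
      rw [EuclideanSpace.norm_eq, Real.sq_sqrt (Finset.sum_nonneg fun t _ => sq_nonneg _)]
      exact Finset.sum_congr rfl fun t _ => by
        rw [PiLp.sub_apply, Real.norm_eq_abs, sq_abs]
    rw [← h1]
    have h2 : y1 - y2 = (bb u).repr (⟨a, ha⟩ - ⟨c, hc⟩) := by
      rw [hy1, hy2, map_sub]
    rw [h2, LinearIsometryEquiv.norm_map]
    have h3 : ‖(⟨a, ha⟩ - ⟨c, hc⟩ : (ℝ ∙ W' u)ᗮ)‖ = ‖a - c‖ := rfl
    rw [h3]
  refine ⟨fun i => fun t => F (rep i) (X' i) t, fun i j hij => ?_⟩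
  have hrep := hrepadj i j hij
  have hmemj : X' j ∈ (ℝ ∙ W' (rep i))ᗮ := hrep ▸ hmem j
  calc ∑ t, (F (rep i) (X' i) t - F (rep j) (X' j) t) ^ 2
      = ∑ t, (F (rep i) (X' i) t - F (rep i) (X' j) t) ^ 2 := by rw [hrep]
    _ = ‖X' i - X' j‖ ^ 2 := hiso (rep i) (X' i) (X' j) (hmem i) hmemj
    _ = d i j := hXdist i j hij


/-- For every graph `G`, `gd(G) ≥ ed(G) + 1`. -/
theorem edSup_add_one_le_gd {V : Type} [Fintype V] (G : SimpleGraph V) :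
    edSup G + 1 ≤ gd G := by
  classical
  have hSne : ({k : ℕ | 1 ≤ k ∧ ∀ X : Matrix V V ℝ, X.PosSemidef →
      ∃ Y : Matrix V V ℝ, Y.PosSemidef ∧ Y.rank ≤ k ∧
        (∀ i, Y i i = X i i) ∧ (∀ i j, G.Adj i j → Y i j = X i j)}).Nonempty := by
    refine ⟨max 1 (Fintype.card V), le_max_left _ _, fun X hX => ⟨X, hX, ?_, fun i => rfl,
      fun i j _ => rfl⟩⟩
    exact le_trans (Matrix.rank_le_card_width X) (le_max_right _ _)
  refine le_csInf hSne fun k hk => ?_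
  obtain ⟨hk1, hkP⟩ := hk
  have hTb : ∀ m ∈ {m : ℕ | ∃ d : V → V → ℝ, (∃ k, HasEucRep G d k) ∧ edOf G d = m},
      m ≤ k - 1 := by
    rintro m ⟨d, ⟨r, ⟨p, hp⟩⟩, rfl⟩
    have hrep : HasEucRep G d (k - 1) := key_lemma G d hk1 hkP p hp
    exact Nat.sInf_le hrep
  have hTne : ({m : ℕ | ∃ d : V → V → ℝ, (∃ k, HasEucRep G d k) ∧ edOf G d = m}).Nonempty := by
    refine ⟨edOf G (fun _ _ => 0), ⟨fun _ _ => 0, ⟨0, ⟨fun _ => fun t => 0, ?_⟩⟩, rfl⟩⟩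
    intro i j _
    simp
  have hsup : edSup G ≤ k - 1 := csSup_le hTne hTb
  omega

end Auxiliary
end
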